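/- arXiv:1201.4116 — 14 statements merged into one kernel-verified Lean document; each statement's English description precedes it below -/
import Mathlib

section
/- Fix cells i ≠ k with n ≥ 2, and fix nonnegative values ρ_h ≥ 0 for all cells h ∉ {i,k}. Then the one-variable function t ↦ f_i(ρ) obtained by setting ρ_k = t (t ≥ 0) is differentiable, and its derivative tends to ln(2)·Σ_{j∈J_i} b_{ikj}/a_{ij} as t → ∞. -/
open Real Filter

lemma auxA (A B C t : ℝ) (hA : 0 < A) (hB : 0 < B) (hC : 0 < C) (ht : 0 ≤ t) :
    HasDerivAt (fun t : ℝ => 1 / (A * Real.logb 2 (1 + 1 / (B * t + C))))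
      (Real.log 2 * (B / A) /
        ((B * t + C) * (B * t + C + 1) * (Real.log (1 + 1 / (B * t + C))) ^ 2)) t := by
  have hu : 0 < B * t + C := by positivity
  have h1 : HasDerivAt (fun t : ℝ => B * t + C) B t := by
    simpa using ((hasDerivAt_id t).const_mul B).add_const C
  have h2 : HasDerivAt (fun t : ℝ => 1 + 1 / (B * t + C))
      (-B / (B * t + C) ^ 2) t := by
    simpa [one_div] using (h1.inv hu.ne').const_add 1
  have hv : (1 : ℝ) < 1 + 1 / (B * t + C) := by
    have : 0 < 1 / (B * t + C) := by positivity
    linarith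
  have hv0 : (0 : ℝ) < 1 + 1 / (B * t + C) := by linarith
  have hlogv : 0 < Real.log (1 + 1 / (B * t + C)) := Real.log_pos hv
  have h3 : HasDerivAt (fun t : ℝ => A * Real.logb 2 (1 + 1 / (B * t + C)))
      (A * ((-B / (B * t + C) ^ 2) / (1 + 1 / (B * t + C)) / Real.log 2)) t := by
    have := ((h2.log hv0.ne').div_const (Real.log 2)).const_mul A
    simpa [Real.logb, div_eq_mul_inv] using this
  have hden : A * Real.logb 2 (1 + 1 / (B * t + C)) ≠ 0 := by
    have : 0 < Real.logb 2 (1 + 1 / (B * t + C)) := Real.logb_pos (by norm_num) hv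
    positivity
  have h4 := h3.inv hden
  have hl2 : Real.log 2 ≠ 0 := ne_of_gt (Real.log_pos (by norm_num))
  have heq : -(A * ((-B / (B * t + C) ^ 2) / (1 + 1 / (B * t + C)) / Real.log 2)) /
      (A * Real.logb 2 (1 + 1 / (B * t + C))) ^ 2 =
      Real.log 2 * (B / A) /
        ((B * t + C) * (B * t + C + 1) * (Real.log (1 + 1 / (B * t + C))) ^ 2) := by
    rw [Real.logb]
    generalize hL : Real.log (1 + 1 / (B * t + C)) = L at hlogv
    generalize hs : B * t + C = s at hu
    have h1s : 1 + 1 / s = (s + 1) / s := by field_simp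
    rw [h1s]
    have hs1 : s + 1 ≠ 0 := by positivity
    field_simp
  rw [heq] at h4
  refine h4.congr_of_eventuallyEq (Filter.Eventually.of_forall fun x => ?_)
  simp [one_div]

lemma auxB (A B C : ℝ) (hA : 0 < A) (hB : 0 < B) (hC : 0 < C) :
    Tendsto (fun t : ℝ => Real.log 2 * (B / A) /
        ((B * t + C) * (B * t + C + 1) * (Real.log (1 + 1 / (B * t + C))) ^ 2))
      atTop (nhds (Real.log 2 * (B / A))) := by
  have hu : Tendsto (fun t : ℝ => B * t + C) atTop atTop := by
    apply tendsto_atTop_add_const_right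
    exact (tendsto_id.const_mul_atTop hB)
  have key : Tendsto (fun x : ℝ => x * (x + 1) * (Real.log (1 + 1 / x)) ^ 2) atTop (nhds 1) := by
    have h1 : Tendsto (fun x : ℝ => x * Real.log (1 + 1 / x)) atTop (nhds 1) :=
      Real.tendsto_mul_log_one_add_div_atTop 1
    have h0 : Tendsto (fun x : ℝ => Real.log (1 + 1 / x)) atTop (nhds 0) := by
      have hi : Tendsto (fun x : ℝ => 1 + 1 / x) atTop (nhds 1) := by
        simpa [one_div] using tendsto_const_nhds.add (tendsto_inv_atTop_zero (𝕜 := ℝ))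
      have := (Real.continuousAt_log (by norm_num)).tendsto.comp hi
      simpa [Function.comp_def] using this
    have h2 : Tendsto (fun x : ℝ => (x + 1) * Real.log (1 + 1 / x)) atTop (nhds 1) := by
      have := h1.add h0
      simpa [add_mul, one_mul] using this.congr (fun x => by ring)
    have := h1.mul h2
    simpa using this.congr (fun x => by ring)
  have hcomp : Tendsto (fun t : ℝ => (B * t + C) * (B * t + C + 1) *
      (Real.log (1 + 1 / (B * t + C))) ^ 2) atTop (nhds 1) := key.comp hu
  have h := (tendsto_const_nhds (x := Real.log 2 * (B / A)) (f := atTop)).div hcomp one_ne_zero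
  rw [div_one] at h
  exact h

/-- The one-variable section of the load function `f i` in the variable `ρ k`
(for `k ≠ i`) is differentiable for nonnegative arguments, and its derivative
tends to `ln 2 · Σ_{j ∈ J i} b i k j / a i j` as the argument tends to infinity. -/
theorem stmt_0
    (n : ℕ) (hn : 2 ≤ n)
    (J : Fin n → Finset ℕ) (hJ : ∀ i, (J i).Nonempty)
    (a c : Fin n → ℕ → ℝ) (b : Fin n → Fin n → ℕ → ℝ)
    (ha : ∀ i, ∀ j ∈ J i, 0 < a i j)
    (hc : ∀ i, ∀ j ∈ J i, 0 < c i j)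
    (hb : ∀ i k, k ≠ i → ∀ j ∈ J i, 0 < b i k j)
    (f : Fin n → (Fin n → ℝ) → ℝ)
    (hf : ∀ i ρ, f i ρ =
      ∑ j ∈ J i, 1 / (a i j * Real.logb 2
        (1 + 1 / (∑ k ∈ Finset.univ.erase i, b i k j * ρ k + c i j))))
    (i k : Fin n) (hik : i ≠ k) (ρ : Fin n → ℝ)
    (hρ : ∀ h : Fin n, h ≠ i → h ≠ k → 0 ≤ ρ h) :
    (∀ t : ℝ, 0 ≤ t →
      DifferentiableAt ℝ (fun t : ℝ => f i (Function.update ρ k t)) t) ∧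
    Filter.Tendsto (deriv (fun t : ℝ => f i (Function.update ρ k t)))
      Filter.atTop (nhds (Real.log 2 * ∑ j ∈ J i, b i k j / a i j)) := by
  classical
  set C : ℕ → ℝ :=
    fun j => (∑ h ∈ (Finset.univ.erase i).erase k, b i h j * ρ h) + c i j with hCdef
  have hk : k ∈ Finset.univ.erase i :=
    Finset.mem_erase.2 ⟨hik.symm, Finset.mem_univ k⟩
  have hC : ∀ j ∈ J i, 0 < C j := by
    intro j hj
    have hsum : 0 ≤ ∑ h ∈ (Finset.univ.erase i).erase k, b i h j * ρ h := by
      apply Finset.sum_nonneg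
      intro h hh
      have hhk : h ≠ k := (Finset.mem_erase.1 hh).1
      have hhi : h ≠ i := (Finset.mem_erase.1 (Finset.mem_erase.1 hh).2).1
      exact mul_nonneg (hb i h hhi j hj).le (hρ h hhi hhk)
    exact add_pos_of_nonneg_of_pos hsum (hc i j hj)
  have hfun : (fun t : ℝ => f i (Function.update ρ k t)) =
      fun t : ℝ => ∑ j ∈ J i,
        1 / (a i j * Real.logb 2 (1 + 1 / (b i k j * t + C j))) := by
    funext t
    rw [hf]
    refine Finset.sum_congr rfl fun j hj => ?_
    have : ∑ h ∈ Finset.univ.erase i, b i h j * Function.update ρ k t h =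
        b i k j * t + ∑ h ∈ (Finset.univ.erase i).erase k, b i h j * ρ h := by
      rw [← Finset.add_sum_erase _ (fun h => b i h j * Function.update ρ k t h) hk,
        Function.update_self]
      congr 1
      exact Finset.sum_congr rfl fun h hh => by
        rw [Function.update_of_ne (Finset.mem_erase.1 hh).1]
    rw [this, hCdef]
    ring_nf
  rw [hfun]
  have hder : ∀ t : ℝ, 0 ≤ t →
      HasDerivAt (fun t : ℝ => ∑ j ∈ J i,
          1 / (a i j * Real.logb 2 (1 + 1 / (b i k j * t + C j))))
        (∑ j ∈ J i, Real.log 2 * (b i k j / a i j) /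
          ((b i k j * t + C j) * (b i k j * t + C j + 1) *
            (Real.log (1 + 1 / (b i k j * t + C j))) ^ 2)) t := by
    intro t ht
    exact HasDerivAt.fun_sum fun j hj =>
      auxA (a i j) (b i k j) (C j) t (ha i j hj) (hb i k hik.symm j hj) (hC j hj) ht
  constructor
  · intro t ht
    exact (hder t ht).differentiableAt
  · rw [Finset.mul_sum]
    refine Filter.Tendsto.congr'
      (((Filter.eventually_ge_atTop (0 : ℝ)).mono fun t ht => ((hder t ht).deriv).symm)) ?_
    exact tendsto_finset_sum _ fun j hj =>
      auxB (a i j) (b i k j) (C j) (ha i j hj) (hb i k hik.symm j hj) (hC j hj)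
end

section
/- (Strict radial quasiconcavity) For each cell i, if a nonnegative vector ρ ∈ ℝ_{≥0}^n satisfies f_i(ρ) = ρ_i, then for every λ ∈ (0,1) one has f_i(λ·ρ) > λ·ρ_i. -/
lemma bern_log {u l : ℝ} (hu : 0 < u) (hl0 : 0 < l) (hl1 : l ≤ 1) :
    l * Real.log (1 + 1 / (l * u)) ≤ Real.log (1 + 1 / u) := by
  have hlu : 0 < l * u := mul_pos hl0 hu
  have hx : (0:ℝ) ≤ 1 / (l * u) := by positivity
  have h1 : (0:ℝ) < 1 + 1 / (l * u) := by positivity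
  have hrw : l * Real.log (1 + 1 / (l * u)) = Real.log ((1 + 1 / (l * u)) ^ l) := by
    rw [Real.log_rpow h1]
  rw [hrw]
  apply Real.log_le_log (by positivity)
  have heq : 1 + l * (1 / (l * u)) = 1 + 1 / u := by
    field_simp
  calc (1 + 1 / (l * u)) ^ l
      ≤ 1 + l * (1 / (l * u)) :=
        rpow_one_add_le_one_add_mul_self (by linarith) hl0.le hl1
    _ = 1 + 1 / u := heq

lemma key_term {a c S l : ℝ} (ha : 0 < a) (hc : 0 < c) (hS : 0 ≤ S)
    (hl0 : 0 < l) (hl1 : l < 1) :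
    l * (1 / (a * Real.logb 2 (1 + 1 / (S + c)))) <
      1 / (a * Real.logb 2 (1 + 1 / (l * S + c))) := by
  have hu : 0 < S + c := by linarith
  have h2 : (1:ℝ) < 2 := one_lt_two
  have hL : 0 < Real.logb 2 (1 + 1 / (S + c)) := by
    apply Real.logb_pos h2
    have : 0 < 1 / (S + c) := by positivity
    linarith
  have hlc : 0 < l * S + c := by positivity
  have hL' : 0 < Real.logb 2 (1 + 1 / (l * S + c)) := by
    apply Real.logb_pos h2
    have : 0 < 1 / (l * S + c) := by positivity
    linarith
  -- main log inequality: l * L' < L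
  have hmain : l * Real.logb 2 (1 + 1 / (l * S + c)) < Real.logb 2 (1 + 1 / (S + c)) := by
    have hstep1 : Real.logb 2 (1 + 1 / (l * S + c)) < Real.logb 2 (1 + 1 / (l * (S + c))) := by
      apply Real.logb_lt_logb h2
      · have : 0 < 1 / (l * S + c) := by positivity
        linarith
      · have hlt : l * (S + c) < l * S + c := by nlinarith
        have : 1 / (l * S + c) < 1 / (l * (S + c)) :=
          one_div_lt_one_div_of_lt (by positivity) hlt
        linarith
    have hstep2 : l * Real.logb 2 (1 + 1 / (l * (S + c))) ≤ Real.logb 2 (1 + 1 / (S + c)) := by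
      have hbl := bern_log hu hl0 hl1.le
      have hlog2 : 0 < Real.log 2 := Real.log_pos h2
      unfold Real.logb
      rw [← mul_div_assoc]
      gcongr
    calc l * Real.logb 2 (1 + 1 / (l * S + c))
        < l * Real.logb 2 (1 + 1 / (l * (S + c))) := by
          exact (mul_lt_mul_iff_right₀ hl0).mpr hstep1
      _ ≤ Real.logb 2 (1 + 1 / (S + c)) := hstep2
  rw [mul_one_div, div_lt_div_iff₀ (by positivity) (by positivity)]
  calc l * (a * Real.logb 2 (1 + 1 / (l * S + c)))
      = a * (l * Real.logb 2 (1 + 1 / (l * S + c))) := by ring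
    _ < a * Real.logb 2 (1 + 1 / (S + c)) := by
        exact (mul_lt_mul_iff_right₀ ha).mpr hmain
    _ = 1 * (a * Real.logb 2 (1 + 1 / (S + c))) := by ring

/-- Strict radial quasiconcavity: if `f i ρ = ρ i` for a nonnegative `ρ`,
then `f i (λ·ρ) > λ·ρ i` for every `λ ∈ (0,1)`. -/
theorem stmt_3
    (n : ℕ) (hn : 2 ≤ n)
    (J : Fin n → Finset ℕ) (hJ : ∀ i, (J i).Nonempty)
    (a c : Fin n → ℕ → ℝ) (b : Fin n → Fin n → ℕ → ℝ)
    (ha : ∀ i, ∀ j ∈ J i, 0 < a i j)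
    (hc : ∀ i, ∀ j ∈ J i, 0 < c i j)
    (hb : ∀ i k, k ≠ i → ∀ j ∈ J i, 0 < b i k j)
    (f : Fin n → (Fin n → ℝ) → ℝ)
    (hf : ∀ i ρ, f i ρ =
      ∑ j ∈ J i, 1 / (a i j * Real.logb 2
        (1 + 1 / (∑ k ∈ Finset.univ.erase i, b i k j * ρ k + c i j))))
    (i : Fin n) (ρ : Fin n → ℝ) (hρ : ∀ k, 0 ≤ ρ k)
    (hfix : f i ρ = ρ i)
    (l : ℝ) (hl0 : 0 < l) (hl1 : l < 1) :
    l * ρ i < f i (fun k => l * ρ k) := by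
  have hsum : ∀ j, (∑ k ∈ Finset.univ.erase i, b i k j * (l * ρ k))
      = l * ∑ k ∈ Finset.univ.erase i, b i k j * ρ k := by
    intro j
    rw [Finset.mul_sum]
    exact Finset.sum_congr rfl fun k _ => by ring
  rw [← hfix, hf i ρ, hf i (fun k => l * ρ k), Finset.mul_sum]
  apply Finset.sum_lt_sum_of_nonempty (hJ i)
  intro j hj
  rw [hsum j]
  have hS : 0 ≤ ∑ k ∈ Finset.univ.erase i, b i k j * ρ k := by
    apply Finset.sum_nonneg
    intro k hk
    exact mul_nonneg (hb i k (Finset.ne_of_mem_erase hk) j hj).le (hρ k)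
  exact key_term (ha i j hj) (hc i j hj) hS hl0 hl1
end

section
/- (Uniqueness) The load-coupling system has at most one nonnegative solution: if ρ¹ ≥ 0 and ρ² ≥ 0 both satisfy f_i(ρ) = ρ_i for every cell i, then ρ¹ = ρ². -/
private lemma logb_arg_pos (S c : ℝ) (hS : 0 ≤ S) (hc : 0 < c) :
    0 < Real.logb 2 (1 + 1 / (S + c)) := by
  have h : 0 < S + c := by linarith
  have h0 : 0 < 1 / (S + c) := by positivity
  exact Real.logb_pos one_lt_two (by linarith)

/-- Scalability of the key log expression. -/
private lemma key_log (S c l : ℝ) (hS : 0 ≤ S) (hc : 0 < c) (hl : 1 < l) :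
    Real.logb 2 (1 + 1 / (S + c)) < l * Real.logb 2 (1 + 1 / (l * S + c)) := by
  have hSc : 0 < S + c := by linarith
  have hlSc : 0 < l * S + c := by nlinarith
  have harg : (0:ℝ) < 1 + 1 / (l * S + c) := by positivity
  have h1 : l * Real.logb 2 (1 + 1 / (l * S + c)) =
      Real.logb 2 ((1 + 1 / (l * S + c)) ^ l) := by
    rw [Real.logb, Real.logb, Real.log_rpow harg]
    ring
  rw [h1]
  apply Real.logb_lt_logb one_lt_two (by positivity)
  have h0 : 0 < 1 / (l * S + c) := by positivity
  have hb : 1 + l * (1 / (l * S + c)) ≤ (1 + 1 / (l * S + c)) ^ l :=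
    one_add_mul_self_le_rpow_one_add (by linarith) hl.le
  have hlt : 1 / (S + c) < l * (1 / (l * S + c)) := by
    rw [mul_one_div, div_lt_div_iff₀ hSc hlSc]
    nlinarith
  linarith

private lemma term_lt (a c S₁ S₂ l : ℝ) (ha : 0 < a) (hc : 0 < c)
    (hS₁ : 0 ≤ S₁) (hS₂ : 0 ≤ S₂) (hle : S₁ ≤ l * S₂) (hl : 1 < l) :
    1 / (a * Real.logb 2 (1 + 1 / (S₁ + c))) <
      l * (1 / (a * Real.logb 2 (1 + 1 / (S₂ + c)))) := by
  have L₁pos := logb_arg_pos S₁ c hS₁ hc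
  have L₂pos := logb_arg_pos S₂ c hS₂ hc
  have hlS₂ : 0 ≤ l * S₂ := by nlinarith
  have LlPos := logb_arg_pos (l * S₂) c hlS₂ hc
  have hS₁c : 0 < S₁ + c := by linarith
  have hlSc : 0 < l * S₂ + c := by linarith
  have hmono : Real.logb 2 (1 + 1 / (l * S₂ + c)) ≤ Real.logb 2 (1 + 1 / (S₁ + c)) := by
    apply Real.logb_le_logb_of_le one_lt_two (by positivity)
    have : 1 / (l * S₂ + c) ≤ 1 / (S₁ + c) :=
      one_div_le_one_div_of_le hS₁c (by linarith)
    linarith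
  have hkey := key_log S₂ c l hS₂ hc hl
  have hL : Real.logb 2 (1 + 1 / (S₂ + c)) < l * Real.logb 2 (1 + 1 / (S₁ + c)) := by
    calc Real.logb 2 (1 + 1 / (S₂ + c)) < l * Real.logb 2 (1 + 1 / (l * S₂ + c)) := hkey
    _ ≤ l * Real.logb 2 (1 + 1 / (S₁ + c)) := by nlinarith
  rw [mul_one_div, div_lt_div_iff₀ (by positivity) (by positivity)]
  nlinarith

private lemma fixed_le
    (n : ℕ) (hn : 2 ≤ n)
    (J : Fin n → Finset ℕ) (hJ : ∀ i, (J i).Nonempty)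
    (a c : Fin n → ℕ → ℝ) (b : Fin n → Fin n → ℕ → ℝ)
    (ha : ∀ i, ∀ j ∈ J i, 0 < a i j)
    (hc : ∀ i, ∀ j ∈ J i, 0 < c i j)
    (hb : ∀ i k, k ≠ i → ∀ j ∈ J i, 0 < b i k j)
    (f : Fin n → (Fin n → ℝ) → ℝ)
    (hf : ∀ i ρ, f i ρ =
      ∑ j ∈ J i, 1 / (a i j * Real.logb 2
        (1 + 1 / (∑ k ∈ Finset.univ.erase i, b i k j * ρ k + c i j))))
    (ρ₁ ρ₂ : Fin n → ℝ)
    (h₁ : ∀ i, 0 ≤ ρ₁ i) (h₂ : ∀ i, 0 ≤ ρ₂ i)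
    (hf₁ : ∀ i, f i ρ₁ = ρ₁ i) (hf₂ : ∀ i, f i ρ₂ = ρ₂ i) :
    ∀ i, ρ₁ i ≤ ρ₂ i := by
  haveI : NeZero n := ⟨by omega⟩
  -- interference sums are nonneg
  have hSnn : ∀ (ρ : Fin n → ℝ), (∀ k, 0 ≤ ρ k) → ∀ (i : Fin n) (j : ℕ), j ∈ J i →
      0 ≤ ∑ k ∈ Finset.univ.erase i, b i k j * ρ k := by
    intro ρ hρ i j hj
    apply Finset.sum_nonneg
    intro k hk
    exact mul_nonneg (hb i k (Finset.mem_erase.1 hk).1 j hj).le (hρ k)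
  -- fixed points are positive
  have pos₂ : ∀ i, 0 < ρ₂ i := by
    intro i
    rw [← hf₂ i, hf]
    apply Finset.sum_pos _ (hJ i)
    intro j hj
    have := logb_arg_pos _ _ (hSnn ρ₂ h₂ i j hj) (hc i j hj)
    have := ha i j hj
    positivity
  -- the maximal ratio
  obtain ⟨i₀, -, hi₀⟩ := Finset.exists_max_image Finset.univ
    (fun i => ρ₁ i / ρ₂ i) Finset.univ_nonempty
  set l := ρ₁ i₀ / ρ₂ i₀ with hl
  have hratio : ∀ k, ρ₁ k ≤ l * ρ₂ k := by
    intro k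
    have := hi₀ k (Finset.mem_univ k)
    rw [div_le_iff₀ (pos₂ k)] at this
    linarith [this]
  by_contra hcon
  push_neg at hcon
  obtain ⟨i, hi⟩ := hcon
  have hl1 : 1 < l := by
    have h := hi₀ i (Finset.mem_univ i)
    have : 1 < ρ₁ i / ρ₂ i := (one_lt_div (pos₂ i)).2 hi
    linarith
  -- contradiction at i₀
  have heq : l * ρ₂ i₀ = ρ₁ i₀ := div_mul_cancel₀ (ρ₁ i₀) (pos₂ i₀).ne'
  have hcontr : ρ₁ i₀ < l * ρ₂ i₀ := by
    rw [← hf₁ i₀, ← hf₂ i₀, hf, hf, Finset.mul_sum]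
    apply Finset.sum_lt_sum_of_nonempty (hJ i₀)
    intro j hj
    apply term_lt _ _ _ _ _ (ha i₀ j hj) (hc i₀ j hj)
      (hSnn ρ₁ h₁ i₀ j hj) (hSnn ρ₂ h₂ i₀ j hj) _ hl1
    calc ∑ k ∈ Finset.univ.erase i₀, b i₀ k j * ρ₁ k
        ≤ ∑ k ∈ Finset.univ.erase i₀, b i₀ k j * (l * ρ₂ k) := by
          apply Finset.sum_le_sum
          intro k hk
          exact mul_le_mul_of_nonneg_left (hratio k)
            (hb i₀ k (Finset.mem_erase.1 hk).1 j hj).le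
      _ = l * ∑ k ∈ Finset.univ.erase i₀, b i₀ k j * ρ₂ k := by
          rw [Finset.mul_sum]; apply Finset.sum_congr rfl; intros; ring
  rw [heq] at hcontr
  exact lt_irrefl _ hcontr

/-- Uniqueness: the load-coupling system `ρ = f(ρ)` has at most one
nonnegative solution. -/
theorem stmt_4
    (n : ℕ) (hn : 2 ≤ n)
    (J : Fin n → Finset ℕ) (hJ : ∀ i, (J i).Nonempty)
    (a c : Fin n → ℕ → ℝ) (b : Fin n → Fin n → ℕ → ℝ)
    (ha : ∀ i, ∀ j ∈ J i, 0 < a i j)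
    (hc : ∀ i, ∀ j ∈ J i, 0 < c i j)
    (hb : ∀ i k, k ≠ i → ∀ j ∈ J i, 0 < b i k j)
    (f : Fin n → (Fin n → ℝ) → ℝ)
    (hf : ∀ i ρ, f i ρ =
      ∑ j ∈ J i, 1 / (a i j * Real.logb 2
        (1 + 1 / (∑ k ∈ Finset.univ.erase i, b i k j * ρ k + c i j))))
    (ρ₁ ρ₂ : Fin n → ℝ)
    (h₁ : ∀ i, 0 ≤ ρ₁ i) (h₂ : ∀ i, 0 ≤ ρ₂ i)
    (hf₁ : ∀ i, f i ρ₁ = ρ₁ i) (hf₂ : ∀ i, f i ρ₂ = ρ₂ i) :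
    ρ₁ = ρ₂ := by
  have hle := fixed_le n hn J hJ a c b ha hc hb f hf ρ₁ ρ₂ h₁ h₂ hf₁ hf₂
  have hge := fixed_le n hn J hJ a c b ha hc hb f hf ρ₂ ρ₁ h₂ h₁ hf₂ hf₁
  funext i
  exact le_antisymm (hle i) (hge i)
end

section
/- (Existence of an optimal solution to the load-minimization problem) If there exists a nonnegative vector ρ̄ ∈ ℝ_{≥0}^n with f_i(ρ̄) ≤ ρ̄_i for every cell i, then the minimum of Σ_{i=1}^n ρ_i over the feasible set S = {ρ ∈ ℝ_{≥0}^n : f_i(ρ) ≤ ρ_i for all i} is attained: there exists ρ° ∈ S such that Σ_i ρ°_i ≤ Σ_i ρ_i for every ρ ∈ S. -/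
/-- If the feasible set `{ρ ≥ 0 : f(ρ) ≤ ρ}` is nonempty, then the total load
`Σ_i ρ_i` attains its minimum over this set. -/
theorem stmt_5
    (n : ℕ) (hn : 2 ≤ n)
    (J : Fin n → Finset ℕ) (hJ : ∀ i, (J i).Nonempty)
    (a c : Fin n → ℕ → ℝ) (b : Fin n → Fin n → ℕ → ℝ)
    (ha : ∀ i, ∀ j ∈ J i, 0 < a i j)
    (hc : ∀ i, ∀ j ∈ J i, 0 < c i j)
    (hb : ∀ i k, k ≠ i → ∀ j ∈ J i, 0 < b i k j)
    (f : Fin n → (Fin n → ℝ) → ℝ)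
    (hf : ∀ i ρ, f i ρ =
      ∑ j ∈ J i, 1 / (a i j * Real.logb 2
        (1 + 1 / (∑ k ∈ Finset.univ.erase i, b i k j * ρ k + c i j))))
    (ρbar : Fin n → ℝ) (hbar : ∀ i, 0 ≤ ρbar i)
    (hfeas : ∀ i, f i ρbar ≤ ρbar i) :
    ∃ ρ₀ : Fin n → ℝ, (∀ i, 0 ≤ ρ₀ i) ∧ (∀ i, f i ρ₀ ≤ ρ₀ i) ∧
      ∀ ρ : Fin n → ℝ, (∀ i, 0 ≤ ρ i) → (∀ i, f i ρ ≤ ρ i) →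
        ∑ i, ρ₀ i ≤ ∑ i, ρ i := by
  classical
  have hFin : Nonempty (Fin n) := ⟨⟨0, by omega⟩⟩
  set M : ℝ := ∑ i, ρbar i with hM
  set O : Set (Fin n → ℝ) := {ρ | ∀ i, 0 ≤ ρ i} with hOdef
  -- continuity of f i at points of O
  have hcont : ∀ i, ∀ ρ ∈ O, ContinuousAt (f i) ρ := by
    intro i ρ hρ
    have hfi : f i = fun ρ => ∑ j ∈ J i, 1 / (a i j * Real.logb 2
        (1 + 1 / (∑ k ∈ Finset.univ.erase i, b i k j * ρ k + c i j))) :=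
      funext (hf i)
    rw [hfi]
    apply tendsto_finset_sum
    intro j hj
    have hdcont : ContinuousAt (fun ρ : Fin n → ℝ =>
        ∑ k ∈ Finset.univ.erase i, b i k j * ρ k + c i j) ρ := by
      exact ((continuous_finset_sum _ fun k _ =>
        continuous_const.mul (continuous_apply k)).add continuous_const).continuousAt
    have hdpos : 0 < ∑ k ∈ Finset.univ.erase i, b i k j * ρ k + c i j := by
      have : 0 ≤ ∑ k ∈ Finset.univ.erase i, b i k j * ρ k :=
        Finset.sum_nonneg fun k hk =>
          mul_nonneg (hb i k (Finset.ne_of_mem_erase hk) j hj).le (hρ k)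
      linarith [hc i j hj]
    have hvcont : ContinuousAt (fun ρ : Fin n → ℝ =>
        1 + 1 / (∑ k ∈ Finset.univ.erase i, b i k j * ρ k + c i j)) ρ :=
      continuousAt_const.add (continuousAt_const.div hdcont hdpos.ne')
    have hvgt : 1 < 1 + 1 / (∑ k ∈ Finset.univ.erase i, b i k j * ρ k + c i j) := by
      have := one_div_pos.mpr hdpos
      linarith
    have hlogpos : 0 < Real.logb 2
        (1 + 1 / (∑ k ∈ Finset.univ.erase i, b i k j * ρ k + c i j)) :=
      Real.logb_pos one_lt_two hvgt
    exact continuousAt_const.div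
      (continuousAt_const.mul ((Real.continuousAt_logb (by linarith)).comp hvcont))
      (mul_pos (ha i j hj) hlogpos).ne'
  have hOclosed : IsClosed O := by
    have : O = ⋂ i, {ρ : Fin n → ℝ | 0 ≤ ρ i} := by
      ext ρ; simp [hOdef]
    rw [this]
    exact isClosed_iInter fun i => isClosed_le continuous_const (continuous_apply i)
  have hsumcont : Continuous (fun ρ : Fin n → ℝ => ∑ i, ρ i) :=
    continuous_finset_sum _ fun i _ => continuous_apply i
  set A : Set (Fin n → ℝ) := O ∩ {ρ | ∑ i, ρ i ≤ M} with hAdef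
  have hAclosed : IsClosed A :=
    hOclosed.inter (isClosed_le hsumcont continuous_const)
  set K : Set (Fin n → ℝ) := ⋂ i, (A ∩ (fun ρ => f i ρ - ρ i) ⁻¹' Set.Iic 0) with hKdef
  have hKmem : ∀ ρ, ρ ∈ K ↔ ((∀ i, 0 ≤ ρ i) ∧ ∑ i, ρ i ≤ M ∧ ∀ i, f i ρ ≤ ρ i) := by
    intro ρ
    simp only [hKdef, Set.mem_iInter, Set.mem_inter_iff, Set.mem_preimage, Set.mem_Iic,
      hAdef, Set.mem_setOf_eq, hOdef, sub_nonpos]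
    constructor
    · intro h
      obtain ⟨i0⟩ := hFin
      exact ⟨(h i0).1.1, (h i0).1.2, fun i => (h i).2⟩
    · rintro ⟨h1, h2, h3⟩ i
      exact ⟨⟨h1, h2⟩, h3 i⟩
  have hKclosed : IsClosed K := by
    apply isClosed_iInter
    intro i
    apply ContinuousOn.preimage_isClosed_of_isClosed _ hAclosed isClosed_Iic
    intro ρ hρ
    exact (ContinuousAt.sub (hcont i ρ hρ.1) (continuous_apply i).continuousAt).continuousWithinAt
  have hKcomp : IsCompact K := by
    apply IsCompact.of_isClosed_subset (isCompact_Icc (a := (0 : Fin n → ℝ)) (b := fun _ => M))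
      hKclosed
    intro ρ hρ
    rw [hKmem] at hρ
    constructor
    · intro i; exact hρ.1 i
    · intro i
      calc ρ i ≤ ∑ k, ρ k := Finset.single_le_sum (fun k _ => hρ.1 k) (Finset.mem_univ i)
        _ ≤ M := hρ.2.1
  have hKne : K.Nonempty := ⟨ρbar, (hKmem ρbar).mpr ⟨hbar, le_refl M, hfeas⟩⟩
  obtain ⟨ρ₀, hρ₀K, hmin⟩ := hKcomp.exists_isMinOn hKne hsumcont.continuousOn
  rw [hKmem] at hρ₀K
  refine ⟨ρ₀, hρ₀K.1, hρ₀K.2.2, ?_⟩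
  intro ρ hρpos hρfeas
  rcases le_or_gt (∑ i, ρ i) M with h | h
  · exact hmin ((hKmem ρ).mpr ⟨hρpos, h, hρfeas⟩)
  · calc ∑ i, ρ₀ i ≤ M := hρ₀K.2.1
      _ ≤ ∑ i, ρ i := h.le
end

section
/- If there exists a nonnegative vector ρ̄ ∈ ℝ_{≥0}^n with f_i(ρ̄) ≤ ρ̄_i for every cell i, then the load-coupling system has a nonnegative solution: there exists ρ* ∈ ℝ_{≥0}^n with f_i(ρ*) = ρ*_i for every cell i. -/
lemma stmt6_term_pos (a c S : ℝ) (ha : 0 < a) (hc : 0 < c) (hS : 0 ≤ S) :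
    0 < a * Real.logb 2 (1 + 1 / (S + c)) := by
  have hSc : 0 < S + c := by linarith
  have h1 : 1 < 1 + 1 / (S + c) := by
    have : 0 < 1 / (S + c) := by positivity
    linarith
  exact mul_pos ha (Real.logb_pos one_lt_two h1)

lemma stmt6_term_mono (a c S S' : ℝ) (ha : 0 < a) (hc : 0 < c)
    (hS : 0 ≤ S) (hSS : S ≤ S') :
    1 / (a * Real.logb 2 (1 + 1 / (S + c))) ≤
      1 / (a * Real.logb 2 (1 + 1 / (S' + c))) := by
  have hS' : 0 ≤ S' := le_trans hS hSS
  have hd' : 0 < a * Real.logb 2 (1 + 1 / (S' + c)) := stmt6_term_pos a c S' ha hc hS'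
  have hle : a * Real.logb 2 (1 + 1 / (S' + c)) ≤ a * Real.logb 2 (1 + 1 / (S + c)) := by
    apply mul_le_mul_of_nonneg_left _ ha.le
    apply Real.logb_le_logb_of_le one_lt_two
    · have : 0 < 1 / (S' + c) := by positivity
      linarith
    · have hinv : 1 / (S' + c) ≤ 1 / (S + c) :=
        one_div_le_one_div_of_le (by linarith) (by linarith)
      linarith
  exact one_div_le_one_div_of_le hd' hle

/-- If there is a nonnegative `ρ̄` with `f(ρ̄) ≤ ρ̄`, then the load-coupling
system has a nonnegative fixed point. -/
theorem stmt_6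
    (n : ℕ) (hn : 2 ≤ n)
    (J : Fin n → Finset ℕ) (hJ : ∀ i, (J i).Nonempty)
    (a c : Fin n → ℕ → ℝ) (b : Fin n → Fin n → ℕ → ℝ)
    (ha : ∀ i, ∀ j ∈ J i, 0 < a i j)
    (hc : ∀ i, ∀ j ∈ J i, 0 < c i j)
    (hb : ∀ i k, k ≠ i → ∀ j ∈ J i, 0 < b i k j)
    (f : Fin n → (Fin n → ℝ) → ℝ)
    (hf : ∀ i ρ, f i ρ =
      ∑ j ∈ J i, 1 / (a i j * Real.logb 2
        (1 + 1 / (∑ k ∈ Finset.univ.erase i, b i k j * ρ k + c i j))))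
    (ρbar : Fin n → ℝ) (hbar : ∀ i, 0 ≤ ρbar i)
    (hfeas : ∀ i, f i ρbar ≤ ρbar i) :
    ∃ ρstar : Fin n → ℝ, (∀ i, 0 ≤ ρstar i) ∧ ∀ i, f i ρstar = ρstar i := by
  -- interference sums are nonnegative on nonnegative vectors
  have hSnonneg : ∀ (i : Fin n), ∀ j ∈ J i, ∀ (ρ : Fin n → ℝ), (∀ k, 0 ≤ ρ k) →
      0 ≤ ∑ k ∈ Finset.univ.erase i, b i k j * ρ k := by
    intro i j hj ρ hρ
    refine Finset.sum_nonneg fun k hk => ?_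
    exact mul_nonneg (hb i k (Finset.ne_of_mem_erase hk) j hj).le (hρ k)
  -- f is nonnegative on nonnegative vectors
  have hfnonneg : ∀ (i : Fin n) (ρ : Fin n → ℝ), (∀ k, 0 ≤ ρ k) → 0 ≤ f i ρ := by
    intro i ρ hρ
    rw [hf]
    refine Finset.sum_nonneg fun j hj => ?_
    have := stmt6_term_pos (a i j) (c i j) _ (ha i j hj) (hc i j hj)
      (hSnonneg i j hj ρ hρ)
    positivity
  -- f is monotone on nonnegative vectors
  have hfmono : ∀ (i : Fin n) (ρ σ : Fin n → ℝ), (∀ k, 0 ≤ ρ k) → ρ ≤ σ →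
      f i ρ ≤ f i σ := by
    intro i ρ σ hρ hρσ
    rw [hf, hf]
    refine Finset.sum_le_sum fun j hj => ?_
    apply stmt6_term_mono _ _ _ _ (ha i j hj) (hc i j hj) (hSnonneg i j hj ρ hρ)
    refine Finset.sum_le_sum fun k hk => ?_
    exact mul_le_mul_of_nonneg_left (hρσ k) (hb i k (Finset.ne_of_mem_erase hk) j hj).le
  haveI : Fact ((0 : Fin n → ℝ) ≤ ρbar) := ⟨fun i => hbar i⟩
  -- the self-map of the order interval [0, ρ̄]
  have hmem : ∀ ρ : Set.Icc (0 : Fin n → ℝ) ρbar,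
      (fun i => f i ρ.1) ∈ Set.Icc (0 : Fin n → ℝ) ρbar := by
    intro ρ
    constructor
    · intro i
      exact hfnonneg i ρ.1 (fun k => ρ.2.1 k)
    · intro i
      exact le_trans (hfmono i ρ.1 ρbar (fun k => ρ.2.1 k) ρ.2.2) (hfeas i)
  set F : Set.Icc (0 : Fin n → ℝ) ρbar → Set.Icc (0 : Fin n → ℝ) ρbar :=
    fun ρ => ⟨fun i => f i ρ.1, hmem ρ⟩ with hF
  have hFmono : Monotone F := by
    intro ρ σ h
    refine Subtype.mk_le_mk.mpr fun i => ?_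
    exact hfmono i ρ.1 σ.1 (fun k => ρ.2.1 k) h
  let Fo : Set.Icc (0 : Fin n → ℝ) ρbar →o Set.Icc (0 : Fin n → ℝ) ρbar := ⟨F, hFmono⟩
  have hfix := OrderHom.map_lfp Fo
  refine ⟨(OrderHom.lfp Fo).1, fun i => (OrderHom.lfp Fo).2.1 i, fun i => ?_⟩
  exact congrFun (congrArg Subtype.val hfix) i
end

section
/- (The asymptotic linearization under-estimates the load function) For every nonnegative vector ρ ∈ ℝ_{≥0}^n and every cell i, h⁰_i(ρ) ≤ f_i(ρ). -/
lemma log_le_aux (x : ℝ) (hx : 0 ≤ x) :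
    Real.log (1+x) ≤ ((x+1) - (x+1)⁻¹) / 2 := by
  set F : ℝ → ℝ := fun y => ((y+1) - (y+1)⁻¹) / 2 - Real.log (1+y) with hF
  have key : ∀ y ∈ Set.Ioi (-1:ℝ), HasDerivAt F (y^2 / (2*(y+1)^2)) y := by
    intro y hy
    simp only [Set.mem_Ioi] at hy
    have hy1 : y + 1 ≠ 0 := by nlinarith
    have hy1' : (1:ℝ) + y ≠ 0 := by nlinarith
    have h1 : HasDerivAt (fun y : ℝ => y + 1) 1 y := by
      simpa using (hasDerivAt_id y).add_const 1
    have h2 : HasDerivAt (fun y : ℝ => (y+1)⁻¹) (-1/(y+1)^2) y := by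
      exact h1.inv hy1
    have h3 : HasDerivAt (fun y : ℝ => Real.log (1+y)) (1/(1+y)) y := by
      have : HasDerivAt (fun y : ℝ => 1 + y) 1 y := by
        simpa using (hasDerivAt_id y).const_add 1
      simpa using this.log hy1'
    have := ((h1.sub h2).div_const 2).sub h3
    convert this using 1
    · rfl
    · rfl
    · rfl
    field_simp
    ring
  have mono : MonotoneOn F (Set.Ici (0:ℝ)) := by
    apply monotoneOn_of_deriv_nonneg (convex_Ici 0)
    · intro y hy
      exact (key y (by simp at hy ⊢; linarith)).continuousAt.continuousWithinAt
    · intro y hy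
      rw [interior_Ici] at hy
      simp only [Set.mem_Ioi] at hy
      exact ((key y (by simp; linarith)).differentiableAt.differentiableWithinAt)
    · intro y hy
      rw [interior_Ici] at hy
      simp only [Set.mem_Ioi] at hy
      rw [(key y (by simp; linarith)).deriv]
      positivity
  have h0 : F 0 = 0 := by simp [hF]
  have := mono (Set.self_mem_Ici) hx hx
  rw [h0] at this
  simp only [hF] at this
  linarith

lemma sq_log_le_aux (x : ℝ) (hx : 0 ≤ x) :
    (Real.log (1+x))^2 ≤ (x+1) + (x+1)⁻¹ - 2 := by
  set F : ℝ → ℝ := fun y => (y+1) + (y+1)⁻¹ - 2 - (Real.log (1+y))^2 with hF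
  have key : ∀ y ∈ Set.Ioi (-1:ℝ),
      HasDerivAt F (1 - (y+1)⁻¹^2 - 2*Real.log (1+y)*(1/(1+y))) y := by
    intro y hy
    simp only [Set.mem_Ioi] at hy
    have hy1 : y + 1 ≠ 0 := by nlinarith
    have hy1' : (1:ℝ) + y ≠ 0 := by nlinarith
    have h1 : HasDerivAt (fun y : ℝ => y + 1) 1 y := by
      simpa using (hasDerivAt_id y).add_const 1
    have h2 : HasDerivAt (fun y : ℝ => (y+1)⁻¹) (-1/(y+1)^2) y := by
      exact h1.inv hy1
    have h3 : HasDerivAt (fun y : ℝ => Real.log (1+y)) (1/(1+y)) y := by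
      have : HasDerivAt (fun y : ℝ => 1 + y) 1 y := by
        simpa using (hasDerivAt_id y).const_add 1
      simpa using this.log hy1'
    have h4 := h3.pow 2
    have := ((h1.add h2).sub_const 2).sub h4
    convert this using 1
    · rfl
    · rfl
    · rfl
    push_cast
    rw [pow_one, inv_pow]
    ring
  have mono : MonotoneOn F (Set.Ici (0:ℝ)) := by
    apply monotoneOn_of_deriv_nonneg (convex_Ici 0)
    · intro y hy
      exact (key y (by simp at hy ⊢; linarith)).continuousAt.continuousWithinAt
    · intro y hy
      rw [interior_Ici] at hy
      simp only [Set.mem_Ioi] at hy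
      exact ((key y (by simp; linarith)).differentiableAt.differentiableWithinAt)
    · intro y hy
      rw [interior_Ici] at hy
      simp only [Set.mem_Ioi] at hy
      rw [(key y (by simp; linarith)).deriv]
      have hl := log_le_aux y hy.le
      have hy1 : (0:ℝ) < y + 1 := by linarith
      have hu : (y+1)⁻¹ * (y+1) = 1 := inv_mul_cancel₀ (by positivity)
      have hinv : (0:ℝ) < (y+1)⁻¹ := by positivity
      have hone : 1/(1+y) = (y+1)⁻¹ := by rw [one_div]; congr 1; ring
      rw [hone]
      nlinarith [mul_le_mul_of_nonneg_right hl hinv.le]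
  have h0 : F 0 = 0 := by norm_num [hF]
  have := mono (Set.self_mem_Ici) hx hx
  rw [h0] at this
  simp only [hF] at this
  linarith

lemma psi_mono (c s : ℝ) (hc : 0 < c) (hs : 0 ≤ s) :
    (Real.log (1 + 1/c))⁻¹ + s ≤ (Real.log (1 + 1/(s+c)))⁻¹ := by
  set ψ : ℝ → ℝ := fun t => (Real.log (1+1/t))⁻¹ - t with hψ
  have key : ∀ t ∈ Set.Ioi (0:ℝ),
      HasDerivAt ψ (1/(t*(t+1)) / (Real.log (1+1/t))^2 - 1) t := by
    intro t ht
    simp only [Set.mem_Ioi] at ht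
    have ht0 : t ≠ 0 := ne_of_gt ht
    have hg : HasDerivAt (fun t : ℝ => 1 + 1/t) (-1/t^2) t := by
      simpa using ((hasDerivAt_id t).inv ht0).const_add 1
    have hgpos : (0:ℝ) < 1 + 1/t := by positivity
    have hL : HasDerivAt (fun t : ℝ => Real.log (1+1/t)) (-1/t^2 / (1+1/t)) t :=
      hg.log (ne_of_gt hgpos)
    have hL0 : Real.log (1+1/t) ≠ 0 := by
      have : (1:ℝ) < 1 + 1/t := by
        have : (0:ℝ) < 1/t := by positivity
        linarith
      exact ne_of_gt (Real.log_pos this)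
    have := (hL.inv hL0).sub (hasDerivAt_id t)
    convert this using 1
    · rfl
    · rfl
    · rfl
    have h1 : -(-1/t^2 / (1+1/t)) = 1/(t*(t+1)) := by
      field_simp
    rw [← h1]
  have mono : MonotoneOn ψ (Set.Ici c) := by
    apply monotoneOn_of_deriv_nonneg (convex_Ici c)
    · intro t ht
      simp only [Set.mem_Ici] at ht
      exact (key t (by simp; linarith)).continuousAt.continuousWithinAt
    · intro t ht
      rw [interior_Ici] at ht
      simp only [Set.mem_Ioi] at ht
      exact (key t (by simp; linarith)).differentiableAt.differentiableWithinAt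
    · intro t ht
      rw [interior_Ici] at ht
      simp only [Set.mem_Ioi] at ht
      have ht0 : 0 < t := lt_trans hc ht
      rw [(key t (Set.mem_Ioi.mpr ht0)).deriv]
      have hsq := sq_log_le_aux (1/t) (by positivity)
      have heq : (1/t+1) + (1/t+1)⁻¹ - 2 = 1/(t*(t+1)) := by
        have h1 : (1/t+1)⁻¹ = t/(t+1) := by
          rw [inv_eq_one_div]
          rw [div_eq_div_iff (by positivity) (by positivity)]
          field_simp
          ring
        rw [h1]
        field_simp
        ring
      rw [show (1:ℝ) + 1/t = 1/t + 1 from by ring] at *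
      have hLpos : 0 < Real.log (1/t+1) := by
        apply Real.log_pos
        have : (0:ℝ) < 1/t := by positivity
        linarith
      have hsq' : (Real.log (1/t+1))^2 ≤ 1/(t*(t+1)) := heq ▸ hsq
      rw [sub_nonneg, le_div_iff₀ (by positivity)]
      linarith
  have hmem1 : c ∈ Set.Ici c := Set.self_mem_Ici
  have hmem2 : s + c ∈ Set.Ici c := by simp [Set.mem_Ici]; linarith
  have := mono hmem1 hmem2 (by linarith)
  simp only [hψ] at this
  linarith


/-- The asymptotic linearization `h⁰` under-estimates the load function:
`h⁰ i ρ ≤ f i ρ` for every nonnegative `ρ` and every cell `i`. -/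
theorem stmt_7
    (n : ℕ) (hn : 2 ≤ n)
    (J : Fin n → Finset ℕ) (hJ : ∀ i, (J i).Nonempty)
    (a c : Fin n → ℕ → ℝ) (b : Fin n → Fin n → ℕ → ℝ)
    (ha : ∀ i, ∀ j ∈ J i, 0 < a i j)
    (hc : ∀ i, ∀ j ∈ J i, 0 < c i j)
    (hb : ∀ i k, k ≠ i → ∀ j ∈ J i, 0 < b i k j)
    (f : Fin n → (Fin n → ℝ) → ℝ)
    (hf : ∀ i ρ, f i ρ =
      ∑ j ∈ J i, 1 / (a i j * Real.logb 2
        (1 + 1 / (∑ k ∈ Finset.univ.erase i, b i k j * ρ k + c i j))))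
    (H : Fin n → Fin n → ℝ)
    (hH : ∀ i k, H i k = Real.log 2 * ∑ j ∈ J i, b i k j / a i j)
    (h0 : Fin n → (Fin n → ℝ) → ℝ)
    (hh0 : ∀ i ρ, h0 i ρ =
      f i 0 + ∑ k ∈ Finset.univ.erase i, H i k * ρ k)
    (ρ : Fin n → ℝ) (hρ : ∀ k, 0 ≤ ρ k) (i : Fin n) :
    h0 i ρ ≤ f i ρ := by
  have hlog2 : 0 < Real.log 2 := Real.log_pos (by norm_num)
  rw [hh0, hf, hf]
  simp only [Pi.zero_apply, mul_zero, Finset.sum_const_zero, zero_add]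
  have hlin : ∑ k ∈ Finset.univ.erase i, H i k * ρ k
      = ∑ j ∈ J i, (Real.log 2 / a i j) *
          (∑ k ∈ Finset.univ.erase i, b i k j * ρ k) := by
    simp only [hH, Finset.mul_sum, Finset.sum_mul]
    rw [Finset.sum_comm]
    apply Finset.sum_congr rfl
    intro j _
    apply Finset.sum_congr rfl
    intro k _
    ring
  rw [hlin, ← Finset.sum_add_distrib]
  apply Finset.sum_le_sum
  intro j hj
  set s : ℝ := ∑ k ∈ Finset.univ.erase i, b i k j * ρ k with hsdef
  have hs : 0 ≤ s := Finset.sum_nonneg fun k hk =>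
    mul_nonneg (hb i k (Finset.ne_of_mem_erase hk) j hj).le (hρ k)
  have hcj := hc i j hj
  have haj := ha i j hj
  have hLc : 0 < Real.log (1 + 1/(c i j)) := Real.log_pos (by
    have : (0:ℝ) < 1/(c i j) := by positivity
    linarith)
  have hLs : 0 < Real.log (1 + 1/(s + c i j)) := Real.log_pos (by
    have h1 : (0:ℝ) < s + c i j := by linarith
    have : (0:ℝ) < 1/(s + c i j) := by positivity
    linarith)
  simp only [Real.logb]
  have e1 : 1/(a i j * (Real.log (1 + 1/(c i j)) / Real.log 2))
      = (Real.log 2 / a i j) * (Real.log (1 + 1/(c i j)))⁻¹ := by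
    field_simp
  have e2 : 1/(a i j * (Real.log (1 + 1/(s + c i j)) / Real.log 2))
      = (Real.log 2 / a i j) * (Real.log (1 + 1/(s + c i j)))⁻¹ := by
    field_simp
  rw [e1, e2]
  calc (Real.log 2 / a i j) * (Real.log (1 + 1/(c i j)))⁻¹ + Real.log 2 / a i j * s
      = (Real.log 2 / a i j) * ((Real.log (1 + 1/(c i j)))⁻¹ + s) := by ring
    _ ≤ (Real.log 2 / a i j) * (Real.log (1 + 1/(s + c i j)))⁻¹ :=
        mul_le_mul_of_nonneg_left (psi_mono (c i j) s hcj hs) (by positivity)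
end

section
/- For all real numbers c and u with 0 < c ≤ u, one has 1/ln(1 + 1/u) − (u − c) ≥ 1/ln(1 + 1/c), with equality when u = c. -/
open Real

/-- `log y ≤ (y - 1/y)/2` for `y ≥ 1`. -/
lemma aux_log_le (y : ℝ) (hy : 1 ≤ y) : Real.log y ≤ (y - 1/y) / 2 := by
  set φ : ℝ → ℝ := fun t => (t - 1/t) / 2 - Real.log t with hφ
  have key : MonotoneOn φ (Set.Ici 1) := by
    have hderiv : ∀ t ∈ Set.Ioi (1:ℝ), HasDerivAt φ ((1 + 1/t^2)/2 - 1/t) t := by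
      intro t ht
      have ht0' : (0:ℝ) < t := lt_trans one_pos ht
      have ht0 : t ≠ 0 := ht0'.ne'
      have h1 : HasDerivAt (fun t : ℝ => (t - 1/t) / 2 - Real.log t)
          ((1 - (-1 / t^2)) / 2 - 1/t) t := by
        have hinv : HasDerivAt (fun t : ℝ => 1/t) (-1 / t^2) t := by
          simpa [Pi.inv_def] using (hasDerivAt_id t).inv ht0
        exact (((hasDerivAt_id t).sub hinv).div_const 2).sub ((Real.hasDerivAt_log ht0).congr_deriv (one_div t).symm)
      convert h1 using 1
      ring
    apply monotoneOn_of_deriv_nonneg (convex_Ici 1)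
    · apply ContinuousOn.sub
      · exact (continuousOn_id.sub (continuousOn_const.div continuousOn_id
          (fun t ht => by have : (1:ℝ) ≤ t := ht; positivity))).div_const 2
      · exact Real.continuousOn_log.comp continuousOn_id
          (fun t ht => by have : (1:ℝ) ≤ t := ht; simp; positivity)
    · intro t ht
      rw [interior_Ici] at ht
      exact (hderiv t ht).differentiableAt.differentiableWithinAt
    · intro t ht
      rw [interior_Ici] at ht
      rw [(hderiv t ht).deriv]
      have ht1 : 1 < t := ht
      have ht0 : 0 < t := by linarith
      have h : (1 + 1/t^2)/2 - 1/t = (t-1)^2 / (2*t^2) := by field_simp; ring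
      rw [h]; positivity
  have h1 : φ 1 ≤ φ y := key (by norm_num) hy hy
  have : φ 1 = 0 := by simp [hφ]
  rw [this] at h1
  simpa [hφ, sub_nonneg] using h1

/-- `(log (1+1/x))^2 ≤ 1/(x*(x+1))` for `x > 0`. -/
lemma aux_sq_log_le (x : ℝ) (hx : 0 < x) :
    (Real.log (1 + 1/x))^2 ≤ 1 / (x * (x+1)) := by
  set a : ℝ := 1 + 1/x with ha
  have ha1 : 1 < a := by rw [ha]; nlinarith [one_div_pos.mpr hx]
  have ha0 : 0 < a := by linarith
  set y := Real.sqrt a with hy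
  have hy1 : 1 ≤ y := by
    rw [hy]; rw [show (1:ℝ) = Real.sqrt 1 by simp]
    exact Real.sqrt_le_sqrt (by linarith)
  have hy0 : 0 < y := by linarith
  have hysq : y^2 = a := Real.sq_sqrt ha0.le
  have hlog : Real.log a = 2 * Real.log y := by
    rw [hy, Real.log_sqrt ha0.le]; ring
  have hle : Real.log a ≤ y - 1/y := by
    rw [hlog]
    have := aux_log_le y hy1
    linarith
  have hlognn : 0 ≤ Real.log a := Real.log_nonneg ha1.le
  have hsq : (Real.log a)^2 ≤ (y - 1/y)^2 := by
    apply sq_le_sq' _ hle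
    have : 0 ≤ y - 1/y := by
      rw [sub_nonneg, div_le_iff₀ hy0]
      nlinarith
    linarith
  have heq : (y - 1/y)^2 = 1 / (x*(x+1)) := by
    have hx0 : x ≠ 0 := hx.ne'
    have hx1 : x + 1 ≠ 0 := by positivity
    have : (y - 1/y)^2 = y^2 - 2 + 1/y^2 := by
      field_simp; ring
    rw [this, hysq]
    rw [ha]
    field_simp
    ring
  rw [← heq]; exact hsq

/-- The function `1/log(1+1/x) - x` is monotone on `(0,∞)`. -/
lemma aux_mono : MonotoneOn (fun x : ℝ => 1 / Real.log (1 + 1/x) - x) (Set.Ioi 0) := by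
  have hderiv : ∀ x ∈ Set.Ioi (0:ℝ), HasDerivAt (fun x : ℝ => 1 / Real.log (1 + 1/x) - x)
      (1/(x*(x+1)) / (Real.log (1 + 1/x))^2 - 1) x := by
    intro x hx
    have hx0 : 0 < x := hx
    have hxne : x ≠ 0 := hx0.ne'
    have hgt : 1 < 1 + 1/x := by nlinarith [one_div_pos.mpr hx0]
    have hane : 1 + 1/x ≠ 0 := by linarith
    have hlogpos : 0 < Real.log (1 + 1/x) := Real.log_pos hgt
    have h1 : HasDerivAt (fun x : ℝ => 1 + 1/x) (-1/x^2) x := by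
      simpa [Pi.add_def, Pi.inv_def] using (hasDerivAt_const x (1:ℝ)).add ((hasDerivAt_id x).inv hxne)
    have h2 : HasDerivAt (fun x : ℝ => Real.log (1 + 1/x)) ((1+1/x)⁻¹ * (-1/x^2)) x := by
      simpa [Function.comp_def] using (Real.hasDerivAt_log hane).comp x h1
    have h3 : HasDerivAt (fun x : ℝ => (Real.log (1 + 1/x))⁻¹)
        (-((1+1/x)⁻¹ * (-1/x^2)) / (Real.log (1 + 1/x))^2) x := h2.inv hlogpos.ne'
    have h4 : HasDerivAt ((fun x : ℝ => (Real.log (1 + 1/x))⁻¹) - id)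
        (-((1+1/x)⁻¹ * (-1/x^2)) / (Real.log (1 + 1/x))^2 - 1) x := h3.sub (hasDerivAt_id x)
    convert h4 using 1
    · funext t; simp [one_div]
    · have h5 : -((1+1/x)⁻¹ * (-1/x^2)) = 1/(x*(x+1)) := by
        field_simp
      rw [h5]
  apply monotoneOn_of_deriv_nonneg (convex_Ioi 0)
  · intro x hx
    exact (hderiv x hx).continuousAt.continuousWithinAt
  · intro x hx
    rw [interior_Ioi] at hx
    exact (hderiv x hx).differentiableAt.differentiableWithinAt
  · intro x hx
    rw [interior_Ioi] at hx
    rw [(hderiv x hx).deriv]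
    have hx0 : 0 < x := hx
    have hgt : 1 < 1 + 1/x := by nlinarith [one_div_pos.mpr hx0]
    have hlogpos : 0 < Real.log (1 + 1/x) := Real.log_pos hgt
    have hsq := aux_sq_log_le x hx0
    have hxx : 0 < x * (x+1) := by positivity
    rw [sub_nonneg, le_div_iff₀ (by positivity), one_mul]
    exact hsq

/-- For `0 < c ≤ u`: `1/ln(1+1/u) − (u − c) ≥ 1/ln(1+1/c)`, with equality
when `u = c`. -/
theorem stmt_8 (c u : ℝ) (hc : 0 < c) (hcu : c ≤ u) :
    1 / Real.log (1 + 1 / c) ≤ 1 / Real.log (1 + 1 / u) - (u - c) ∧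
    (u = c → 1 / Real.log (1 + 1 / u) - (u - c) = 1 / Real.log (1 + 1 / c)) := by
  constructor
  · have := aux_mono (Set.mem_Ioi.mpr hc) (Set.mem_Ioi.mpr (lt_of_lt_of_le hc hcu)) hcu
    simp only at this
    linarith
  · intro h; subst h; ring
end

section
/- For every real number u > 0, one has u·(u+1)·(ln(1 + 1/u))² < 1. -/
lemma two_log_lt (s : ℝ) (hs1 : 1 < s) : 2 * Real.log s < s - s⁻¹ := by
  set f : ℝ → ℝ := fun x => x - x⁻¹ - 2 * Real.log x with hf
  have mono : StrictMonoOn f (Set.Ici 1) := by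
    apply strictMonoOn_of_deriv_pos (convex_Ici 1)
    · intro x hx
      have hx0 : (0:ℝ) < x := lt_of_lt_of_le one_pos hx
      exact ((continuousAt_id.sub (continuousAt_inv₀ hx0.ne')).sub
        (continuousAt_const.mul (Real.continuousAt_log hx0.ne'))).continuousWithinAt
    · intro x hx
      rw [interior_Ici] at hx
      have hx0 : (0:ℝ) < x := lt_trans one_pos hx
      have hd : HasDerivAt f (1 - (-(x ^ 2)⁻¹) - 2 * x⁻¹) x :=
        ((hasDerivAt_id x).sub (hasDerivAt_inv hx0.ne')).sub
          ((Real.hasDerivAt_log hx0.ne').const_mul 2)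
      rw [hd.deriv]
      have h2 : (1:ℝ) - (-(x ^ 2)⁻¹) - 2 * x⁻¹ = (x - 1) ^ 2 / x ^ 2 := by
        field_simp; ring
      rw [h2]
      have h3 : (0:ℝ) < (x - 1) ^ 2 := pow_pos (by have := Set.mem_Ioi.mp hx; linarith) 2
      positivity
  have h := mono (Set.self_mem_Ici) (Set.mem_Ici.mpr hs1.le) hs1
  simp only [hf, Real.log_one, inv_one] at h
  linarith

/-- For every `u > 0`, `u·(u+1)·(ln(1+1/u))² < 1`. -/
theorem stmt_9 (u : ℝ) (hu : 0 < u) :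
    u * (u + 1) * (Real.log (1 + 1 / u)) ^ 2 < 1 := by
  set t : ℝ := 1 + 1 / u with ht
  have hu' : (0:ℝ) < 1 / u := by positivity
  have ht1 : 1 < t := by simp [ht]; linarith
  have ht0 : (0:ℝ) < t := by linarith
  set s : ℝ := Real.sqrt t with hsdef
  have hs1 : 1 < s := by
    rw [hsdef, show (1:ℝ) = Real.sqrt 1 from Real.sqrt_one.symm]
    exact Real.sqrt_lt_sqrt (by norm_num) ht1
  have hs0 : (0:ℝ) < s := by linarith
  have hss : s ^ 2 = t := Real.sq_sqrt ht0.le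
  have hlog : Real.log t = 2 * Real.log s := by
    rw [hsdef, Real.log_sqrt ht0.le]; ring
  have hlt : Real.log t < s - s⁻¹ := by rw [hlog]; exact two_log_lt s hs1
  have hpos : 0 < Real.log t := Real.log_pos ht1
  have hsq : (Real.log t) ^ 2 < (s - s⁻¹) ^ 2 :=
    pow_lt_pow_left₀ hlt hpos.le (by norm_num)
  have hform : s - s⁻¹ = (t - 1) / s := by
    field_simp
    nlinarith [hss]
  have key : u * (u + 1) * ((t - 1) / s) ^ 2 = 1 := by
    rw [div_pow, hss, ht]
    field_simp
    ring
  calc u * (u + 1) * (Real.log t) ^ 2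
      < u * (u + 1) * ((t - 1) / s) ^ 2 := by
        rw [← hform]
        exact mul_lt_mul_of_pos_left hsq (by positivity)
    _ = 1 := key
end

section
/- If the linear system ρ = h⁰(ρ) has a nonnegative solution, then there exists ε > 0 such that the perturbed linear system ρ_i = f_i(0) + Σ_{k≠i} (H_{ik} + ε)·ρ_k (for all i) also has a nonnegative solution. -/
open Filter Topology

/-- If `ρ = h⁰(ρ)` has a nonnegative solution, then for some `ε > 0` the
perturbed linear system `ρ_i = f_i(0) + Σ_{k≠i} (H_{ik}+ε)·ρ_k` also has
a nonnegative solution. -/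
theorem stmt_12
    (n : ℕ) (hn : 2 ≤ n)
    (J : Fin n → Finset ℕ) (hJ : ∀ i, (J i).Nonempty)
    (a c : Fin n → ℕ → ℝ) (b : Fin n → Fin n → ℕ → ℝ)
    (ha : ∀ i, ∀ j ∈ J i, 0 < a i j)
    (hc : ∀ i, ∀ j ∈ J i, 0 < c i j)
    (hb : ∀ i k, k ≠ i → ∀ j ∈ J i, 0 < b i k j)
    (f : Fin n → (Fin n → ℝ) → ℝ)
    (hf : ∀ i ρ, f i ρ =
      ∑ j ∈ J i, 1 / (a i j * Real.logb 2
        (1 + 1 / (∑ k ∈ Finset.univ.erase i, b i k j * ρ k + c i j))))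
    (H : Fin n → Fin n → ℝ)
    (hH : ∀ i k, H i k = Real.log 2 * ∑ j ∈ J i, b i k j / a i j)
    (h0 : Fin n → (Fin n → ℝ) → ℝ)
    (hh0 : ∀ i ρ, h0 i ρ =
      f i 0 + ∑ k ∈ Finset.univ.erase i, H i k * ρ k)
    (ρ₀ : Fin n → ℝ) (hρ₀ : ∀ i, 0 ≤ ρ₀ i) (hfix : ∀ i, h0 i ρ₀ = ρ₀ i) :
    ∃ ε : ℝ, 0 < ε ∧ ∃ ρ : Fin n → ℝ, (∀ i, 0 ≤ ρ i) ∧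
      ∀ i, f i 0 + ∑ k ∈ Finset.univ.erase i, (H i k + ε) * ρ k = ρ i := by
  haveI : Nonempty (Fin n) := ⟨⟨0, by omega⟩⟩
  -- positivity of f i 0
  have hf0 : ∀ i, 0 < f i 0 := by
    intro i
    rw [hf]
    refine Finset.sum_pos (fun j hj => ?_) (hJ i)
    have h1 : (0:ℝ) < a i j := ha i j hj
    have h2 : (0:ℝ) < c i j := hc i j hj
    have h3 : ∑ k ∈ Finset.univ.erase i, b i k j * (0 : Fin n → ℝ) k + c i j = c i j := by
      simp
    rw [h3]
    have h4 : (0:ℝ) < Real.logb 2 (1 + 1 / c i j) :=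
      Real.logb_pos (by norm_num) (lt_add_of_pos_right 1 (by positivity))
    positivity
  -- nonnegativity of H
  have hHnn : ∀ i k, k ≠ i → 0 ≤ H i k := by
    intro i k hk
    rw [hH]
    refine mul_nonneg (Real.log_nonneg (by norm_num)) (Finset.sum_nonneg fun j hj => ?_)
    exact (div_pos (hb i k hk j hj) (ha i j hj)).le
  have hsum_nn : ∀ i, 0 ≤ ∑ k ∈ Finset.univ.erase i, H i k * ρ₀ k := by
    intro i
    exact Finset.sum_nonneg fun k hk =>
      mul_nonneg (hHnn i k (Finset.ne_of_mem_erase hk)) (hρ₀ k)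
  have hfix' : ∀ i, ρ₀ i = f i 0 + ∑ k ∈ Finset.univ.erase i, H i k * ρ₀ k := by
    intro i; rw [← hfix i, hh0]
  -- choose ε
  set S : ℝ := ∑ k, ρ₀ k with hSdef
  have hS : 0 ≤ S := Finset.sum_nonneg fun k _ => hρ₀ k
  have hSi : ∀ i, ∑ k ∈ Finset.univ.erase i, ρ₀ k ≤ S := by
    intro i
    exact Finset.sum_le_sum_of_subset_of_nonneg (Finset.erase_subset _ _)
      (fun k _ _ => hρ₀ k)
  set m : ℝ := Finset.univ.inf' Finset.univ_nonempty (fun i => f i 0) with hmdef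
  have hm : 0 < m := (Finset.lt_inf'_iff _).2 fun i _ => hf0 i
  have hmle : ∀ i, m ≤ f i 0 := fun i => Finset.inf'_le _ (Finset.mem_univ i)
  set ε : ℝ := m / (2 * (S + 1)) with hεdef
  have hεpos : 0 < ε := by positivity
  have hεS : ε * (S + 1) = m / 2 := by
    rw [hεdef]; field_simp
  have key : ∀ i, 2 * ε * (∑ k ∈ Finset.univ.erase i, ρ₀ k) ≤ f i 0 := by
    intro i
    have h1 : ∑ k ∈ Finset.univ.erase i, ρ₀ k ≤ S + 1 := by linarith [hSi i]
    have h2 : ε * (∑ k ∈ Finset.univ.erase i, ρ₀ k) ≤ ε * (S + 1) :=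
      mul_le_mul_of_nonneg_left h1 hεpos.le
    have := hmle i
    linarith
  -- the perturbed affine map
  set T : (Fin n → ℝ) → (Fin n → ℝ) :=
    fun ρ i => f i 0 + ∑ k ∈ Finset.univ.erase i, (H i k + ε) * ρ k with hT
  have hcoef : ∀ i k, k ∈ Finset.univ.erase i → 0 ≤ H i k + ε := by
    intro i k hk
    exact add_nonneg (hHnn i k (Finset.ne_of_mem_erase hk)) hεpos.le
  have hTmono : ∀ ρ σ : Fin n → ℝ, (∀ k, ρ k ≤ σ k) → ∀ i, T ρ i ≤ T σ i := by
    intro ρ σ h i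
    refine add_le_add_right (Finset.sum_le_sum fun k hk => ?_) _
    exact mul_le_mul_of_nonneg_left (h k) (hcoef i k hk)
  have expand : ∀ (i : Fin n) (ρ : Fin n → ℝ),
      ∑ k ∈ Finset.univ.erase i, (H i k + ε) * ρ k =
      (∑ k ∈ Finset.univ.erase i, H i k * ρ k) + ε * ∑ k ∈ Finset.univ.erase i, ρ k := by
    intro i ρ
    rw [Finset.mul_sum, ← Finset.sum_add_distrib]
    exact Finset.sum_congr rfl fun k _ => by ring
  -- 2ρ₀ is a supersolution
  have hTu : ∀ i, T (fun k => 2 * ρ₀ k) i ≤ 2 * ρ₀ i := by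
    intro i
    have e1 : T (fun k => 2 * ρ₀ k) i =
        f i 0 + ((∑ k ∈ Finset.univ.erase i, H i k * (2 * ρ₀ k))
          + ε * ∑ k ∈ Finset.univ.erase i, 2 * ρ₀ k) := by
      simp only [hT]; rw [expand i (fun k => 2 * ρ₀ k)]
    have e2 : ∑ k ∈ Finset.univ.erase i, H i k * (2 * ρ₀ k) =
        2 * ∑ k ∈ Finset.univ.erase i, H i k * ρ₀ k := by
      rw [Finset.mul_sum]; exact Finset.sum_congr rfl fun k _ => by ring
    have e3 : ∑ k ∈ Finset.univ.erase i, 2 * ρ₀ k =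
        2 * ∑ k ∈ Finset.univ.erase i, ρ₀ k := by
      rw [Finset.mul_sum]
    rw [e1, e2, e3]
    have := hfix' i
    have := key i
    nlinarith [hεpos]
  -- monotone iteration from 0
  set g : ℕ → Fin n → ℝ := fun N => T^[N] 0 with hg
  have hgs : ∀ N, g (N + 1) = T (g N) := fun N => Function.iterate_succ_apply' T N 0
  have hg0 : ∀ i, g 0 i = 0 := fun i => rfl
  have hgu : ∀ N i, g N i ≤ 2 * ρ₀ i := by
    intro N
    induction N with
    | zero => intro i; rw [hg0]; linarith [hρ₀ i]
    | succ N ih =>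
      intro i
      rw [hgs]
      exact le_trans (hTmono (g N) (fun k => 2 * ρ₀ k) ih i) (hTu i)
  have hgmono : ∀ N i, g N i ≤ g (N + 1) i := by
    intro N
    induction N with
    | zero =>
      intro i
      rw [hg0, hgs]
      refine add_nonneg (hf0 i).le (Finset.sum_nonneg fun k hk => ?_)
      exact mul_nonneg (hcoef i k hk) (le_of_eq (hg0 k).symm)
    | succ N ih =>
      intro i
      rw [hgs, hgs]
      exact hTmono (g N) (g (N + 1)) ih i
  have hmono' : ∀ i, Monotone fun N => g N i := fun i =>
    monotone_nat_of_le_succ fun N => hgmono N i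
  have hbdd : ∀ i, BddAbove (Set.range fun N => g N i) := by
    intro i
    exact ⟨2 * ρ₀ i, by rintro x ⟨N, rfl⟩; exact hgu N i⟩
  set ρ : Fin n → ℝ := fun i => ⨆ N, g N i with hρdef
  have hlim : ∀ i, Tendsto (fun N => g N i) atTop (𝓝 (ρ i)) := fun i =>
    tendsto_atTop_ciSup (hmono' i) (hbdd i)
  have hglim : Tendsto g atTop (𝓝 ρ) := tendsto_pi_nhds.2 hlim
  have hcont : ∀ i, Continuous (fun σ : Fin n → ℝ => T σ i) := by
    intro i
    rw [hT]
    exact continuous_const.add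
      (continuous_finset_sum _ fun k _ => continuous_const.mul (continuous_apply k))
  have hfixρ : ∀ i, T ρ i = ρ i := by
    intro i
    have h1 : Tendsto (fun N => T (g N) i) atTop (𝓝 (T ρ i)) :=
      ((hcont i).tendsto ρ).comp hglim
    have h2 : Tendsto (fun N => g (N + 1) i) atTop (𝓝 (ρ i)) :=
      (hlim i).comp (tendsto_add_atTop_nat 1)
    have h3 : (fun N => T (g N) i) = fun N => g (N + 1) i := by
      funext N; rw [hgs]
    rw [h3] at h1
    exact tendsto_nhds_unique h1 h2
  refine ⟨ε, hεpos, ρ, fun i => ?_, fun i => ?_⟩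
  · have := le_ciSup (hbdd i) 0
    simpa [hρdef, hg0 i] using this
  · exact hfixρ i
end

section
/- Let ρ̄ ∈ ℝ^n have all components strictly positive and let ε > 0. Then for every cell i, the difference h^ε_i(λ·ρ̄) − f_i(λ·ρ̄) tends to +∞ as λ → ∞. -/
open Finset Filter

lemma aux_log_lb (x : ℝ) (hx : 0 < x) : 1 / (x + 1) ≤ Real.log (1 + 1 / x) := by
  have h1 : (0:ℝ) < 1 + 1 / x := by positivity
  have h2 : (0:ℝ) < (1 + 1 / x)⁻¹ := by positivity
  have h3 := Real.log_le_sub_one_of_pos h2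
  rw [Real.log_inv] at h3
  have heq : 1 - (1 + 1 / x)⁻¹ = 1 / (x + 1) := by
    field_simp
    ring
  linarith [heq ▸ (by linarith : 1 - (1 + 1/x)⁻¹ ≤ Real.log (1 + 1/x))]

lemma aux_term (a x : ℝ) (ha : 0 < a) (hx : 0 < x) :
    1 / (a * Real.logb 2 (1 + 1 / x)) ≤ Real.log 2 * (x + 1) / a := by
  have hlog2 : (0:ℝ) < Real.log 2 := Real.log_pos (by norm_num)
  have hL : 1 / (x + 1) ≤ Real.log (1 + 1 / x) := aux_log_lb x hx
  have hLpos : 0 < Real.log (1 + 1 / x) := lt_of_lt_of_le (by positivity) hL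
  rw [Real.logb]
  rw [div_le_div_iff₀ (by positivity) ha]
  have h1 : 1 ≤ (x + 1) * Real.log (1 + 1 / x) := by
    have := mul_le_mul_of_nonneg_left hL (by positivity : (0:ℝ) ≤ x + 1)
    have hx1 : (x + 1) * (1 / (x + 1)) = 1 := by field_simp
    linarith
  have expand : Real.log 2 * (x + 1) * (a * (Real.log (1 + 1 / x) / Real.log 2))
      = a * ((x + 1) * Real.log (1 + 1 / x)) := by
    field_simp
  rw [expand]
  nlinarith

/-- For strictly positive `ρ̄` and any `ε > 0`, the difference
`h^ε_i(λ·ρ̄) − f_i(λ·ρ̄)` tends to `+∞` as `λ → ∞`. -/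
theorem stmt_13
    (n : ℕ) (hn : 2 ≤ n)
    (J : Fin n → Finset ℕ) (hJ : ∀ i, (J i).Nonempty)
    (a c : Fin n → ℕ → ℝ) (b : Fin n → Fin n → ℕ → ℝ)
    (ha : ∀ i, ∀ j ∈ J i, 0 < a i j)
    (hc : ∀ i, ∀ j ∈ J i, 0 < c i j)
    (hb : ∀ i k, k ≠ i → ∀ j ∈ J i, 0 < b i k j)
    (f : Fin n → (Fin n → ℝ) → ℝ)
    (hf : ∀ i ρ, f i ρ =
      ∑ j ∈ J i, 1 / (a i j * Real.logb 2
        (1 + 1 / (∑ k ∈ Finset.univ.erase i, b i k j * ρ k + c i j))))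
    (H : Fin n → Fin n → ℝ)
    (hH : ∀ i k, H i k = Real.log 2 * ∑ j ∈ J i, b i k j / a i j)
    (h0 : Fin n → (Fin n → ℝ) → ℝ)
    (hh0 : ∀ i ρ, h0 i ρ =
      f i 0 + ∑ k ∈ Finset.univ.erase i, H i k * ρ k)
    (ρbar : Fin n → ℝ) (hbar : ∀ i, 0 < ρbar i)
    (ε : ℝ) (hε : 0 < ε) (i : Fin n) :
    Filter.Tendsto (fun l : ℝ =>
        (f i 0 + ∑ k ∈ Finset.univ.erase i, (H i k + ε) * (l * ρbar k))
          - f i (fun k => l * ρbar k))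
      Filter.atTop Filter.atTop := by
  set S : ℝ := ∑ k ∈ Finset.univ.erase i, ρbar k with hS
  have hnt : Nontrivial (Fin n) := Fin.nontrivial_iff_two_le.mpr hn
  obtain ⟨k0, hk0⟩ := exists_ne i
  have hne : (Finset.univ.erase i).Nonempty := ⟨k0, Finset.mem_erase.mpr ⟨hk0, Finset.mem_univ _⟩⟩
  have hSpos : 0 < S := Finset.sum_pos (fun k _ => hbar k) hne
  set C : ℝ := ∑ j ∈ J i, Real.log 2 * (c i j + 1) / a i j with hC
  have key : ∀ l : ℝ, 0 ≤ l →
      f i (fun k => l * ρbar k) ≤ (∑ k ∈ Finset.univ.erase i, H i k * (l * ρbar k)) + C := by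
    intro l hl
    rw [hf]
    have hx : ∀ j ∈ J i,
        0 < ∑ k ∈ Finset.univ.erase i, b i k j * (l * ρbar k) + c i j := by
      intro j hj
      have hsum : 0 ≤ ∑ k ∈ Finset.univ.erase i, b i k j * (l * ρbar k) :=
        Finset.sum_nonneg fun k hk =>
          mul_nonneg (le_of_lt (hb i k (Finset.ne_of_mem_erase hk) j hj))
            (mul_nonneg hl (hbar k).le)
      linarith [hc i j hj]
    calc ∑ j ∈ J i, 1 / (a i j * Real.logb 2
          (1 + 1 / (∑ k ∈ Finset.univ.erase i, b i k j * (l * ρbar k) + c i j)))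
        ≤ ∑ j ∈ J i, Real.log 2 *
            ((∑ k ∈ Finset.univ.erase i, b i k j * (l * ρbar k) + c i j) + 1) / a i j :=
          Finset.sum_le_sum fun j hj => aux_term _ _ (ha i j hj) (hx j hj)
      _ = (∑ j ∈ J i, ∑ k ∈ Finset.univ.erase i,
            Real.log 2 * (b i k j / a i j) * (l * ρbar k)) + C := by
          rw [← Finset.sum_add_distrib]
          refine Finset.sum_congr rfl fun j hj => ?_
          have h1 : ∑ k ∈ Finset.univ.erase i,
              Real.log 2 * (b i k j / a i j) * (l * ρbar k)
              = Real.log 2 * (∑ k ∈ Finset.univ.erase i, b i k j * (l * ρbar k)) / a i j := by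
            rw [Finset.mul_sum, Finset.sum_div]
            exact Finset.sum_congr rfl fun k _ => by ring
          rw [h1]
          ring
      _ = (∑ k ∈ Finset.univ.erase i, H i k * (l * ρbar k)) + C := by
          rw [Finset.sum_comm]
          congr 1
          refine Finset.sum_congr rfl fun k hk => ?_
          rw [hH, Finset.mul_sum, ← Finset.sum_mul, ← Finset.mul_sum]
  have main : ∀ᶠ l in atTop, f i 0 - C + ε * S * l ≤
      (f i 0 + ∑ k ∈ Finset.univ.erase i, (H i k + ε) * (l * ρbar k))
        - f i (fun k => l * ρbar k) := by
    filter_upwards [eventually_ge_atTop (0:ℝ)] with l hl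
    have hsplit : ∑ k ∈ Finset.univ.erase i, (H i k + ε) * (l * ρbar k)
        = (∑ k ∈ Finset.univ.erase i, H i k * (l * ρbar k)) + ε * S * l := by
      rw [hS, Finset.mul_sum, Finset.sum_mul, ← Finset.sum_add_distrib]
      exact Finset.sum_congr rfl fun k _ => by ring
    have := key l hl
    rw [hsplit]
    linarith
  refine tendsto_atTop_mono' _ main ?_
  have h1 : Tendsto (fun l : ℝ => ε * S * l) atTop atTop :=
    Tendsto.const_mul_atTop (by positivity) tendsto_id
  exact tendsto_atTop_add_const_left _ _ h1
end

section
/- (Sufficient condition) If the linear system ρ = h⁰(ρ) has a nonnegative solution, then the load-coupling system has a nonnegative solution: there exists ρ* ∈ ℝ_{≥0}^n with f_i(ρ*) = ρ*_i for every cell i. -/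
lemma aux_log (x : ℝ) (hx : 0 < x) : 1/(x+1) ≤ Real.log (1 + 1/x) := by
  have h2 : Real.log (1/(1+1/x)) ≤ 1/(1+1/x) - 1 := Real.log_le_sub_one_of_pos (by positivity)
  rw [Real.log_div one_ne_zero (by positivity)] at h2
  simp only [Real.log_one] at h2
  have e : (1+1/x)⁻¹ = x/(x+1) := by field_simp
  have e2 : x/(x+1) + 1/(x+1) = 1 := by field_simp
  have : 1/(1+1/x) = x/(x+1) := by rw [one_div, e]
  rw [this] at h2
  linarith

lemma aux_logb_pos (u : ℝ) (hu : 0 < u) : 0 < Real.logb 2 (1 + 1/u) :=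
  Real.logb_pos (by norm_num) (by nlinarith [one_div_pos.mpr hu])

lemma aux_pixel (u A : ℝ) (hu : 0 < u) (hA : 0 < A) :
    1 / (A * Real.logb 2 (1 + 1/u)) ≤ Real.log 2 * ((u+1) / A) := by
  have hlb := aux_logb_pos u hu
  have h3 := aux_log u hu
  have hlogpos : 0 < Real.log (1+1/u) := lt_of_lt_of_le (by positivity) h3
  have hl2 : 0 < Real.log 2 := Real.log_pos (by norm_num)
  rw [Real.logb, div_le_iff₀ (by positivity : (0:ℝ) < A * (Real.log (1+1/u) / Real.log 2))]
  have h4 : 1 ≤ (u+1) * Real.log (1+1/u) := by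
    have : (u+1) * (1/(u+1)) = 1 := by field_simp
    nlinarith [mul_le_mul_of_nonneg_left h3 (by positivity : (0:ℝ) ≤ u+1)]
  have : Real.log 2 * ((u+1)/A) * (A * (Real.log (1+1/u)/Real.log 2))
      = (u+1) * Real.log (1+1/u) := by field_simp
  rw [this]; linarith

lemma aux_mono_s15 (u v A : ℝ) (hu : 0 < u) (huv : u ≤ v) (hA : 0 < A) :
    1 / (A * Real.logb 2 (1 + 1/u)) ≤ 1 / (A * Real.logb 2 (1 + 1/v)) := by
  have hv : 0 < v := lt_of_lt_of_le hu huv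
  have h1 := aux_logb_pos u hu
  have h2 := aux_logb_pos v hv
  apply one_div_le_one_div_of_le (by positivity)
  apply mul_le_mul_of_nonneg_left _ hA.le
  have h5 : 1/v ≤ 1/u := one_div_le_one_div_of_le hu huv
  exact Real.logb_le_logb_of_le (by norm_num) (by positivity) (by linarith)

/-- Sufficient condition: if the linear system `ρ = h⁰(ρ)` has a nonnegative
solution, then the load-coupling system `ρ = f(ρ)` has a nonnegative solution. -/
theorem stmt_15
    (n : ℕ) (hn : 2 ≤ n)
    (J : Fin n → Finset ℕ) (hJ : ∀ i, (J i).Nonempty)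
    (a c : Fin n → ℕ → ℝ) (b : Fin n → Fin n → ℕ → ℝ)
    (ha : ∀ i, ∀ j ∈ J i, 0 < a i j)
    (hc : ∀ i, ∀ j ∈ J i, 0 < c i j)
    (hb : ∀ i k, k ≠ i → ∀ j ∈ J i, 0 < b i k j)
    (f : Fin n → (Fin n → ℝ) → ℝ)
    (hf : ∀ i ρ, f i ρ =
      ∑ j ∈ J i, 1 / (a i j * Real.logb 2
        (1 + 1 / (∑ k ∈ Finset.univ.erase i, b i k j * ρ k + c i j))))
    (H : Fin n → Fin n → ℝ)
    (hH : ∀ i k, H i k = Real.log 2 * ∑ j ∈ J i, b i k j / a i j)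
    (h0 : Fin n → (Fin n → ℝ) → ℝ)
    (hh0 : ∀ i ρ, h0 i ρ =
      f i 0 + ∑ k ∈ Finset.univ.erase i, H i k * ρ k)
    (ρ₀ : Fin n → ℝ) (hρ₀ : ∀ i, 0 ≤ ρ₀ i) (hfix : ∀ i, h0 i ρ₀ = ρ₀ i) :
    ∃ ρstar : Fin n → ℝ, (∀ i, 0 ≤ ρstar i) ∧ ∀ i, f i ρstar = ρstar i := by
  have hi0 : Nonempty (Fin n) := ⟨⟨0, by omega⟩⟩
  have hl2 : 0 < Real.log 2 := Real.log_pos (by norm_num)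
  -- positivity of the interference sums
  have hs : ∀ i j (ρ : Fin n → ℝ), (∀ k, 0 ≤ ρ k) → j ∈ J i →
      0 ≤ ∑ k ∈ Finset.univ.erase i, b i k j * ρ k := by
    intro i j ρ hρ hj
    refine Finset.sum_nonneg fun k hk => ?_
    exact mul_nonneg (hb i k (Finset.ne_of_mem_erase hk) j hj).le (hρ k)
  have hu : ∀ i j (ρ : Fin n → ℝ), (∀ k, 0 ≤ ρ k) → j ∈ J i →
      0 < ∑ k ∈ Finset.univ.erase i, b i k j * ρ k + c i j := by
    intro i j ρ hρ hj
    have := hs i j ρ hρ hj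
    have := hc i j hj
    linarith
  -- nonnegativity of f
  have hfnn : ∀ (ρ : Fin n → ℝ), (∀ k, 0 ≤ ρ k) → ∀ i, 0 ≤ f i ρ := by
    intro ρ hρ i
    rw [hf]
    refine Finset.sum_nonneg fun j hj => ?_
    have h1 := aux_logb_pos _ (hu i j ρ hρ hj)
    have h2 := ha i j hj
    positivity
  -- monotonicity of f
  have hmono : ∀ (ρ σ : Fin n → ℝ), (∀ k, 0 ≤ ρ k) → (∀ k, ρ k ≤ σ k) →
      ∀ i, f i ρ ≤ f i σ := by
    intro ρ σ hρ hρσ i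
    rw [hf, hf]
    refine Finset.sum_le_sum fun j hj => ?_
    refine aux_mono_s15 _ _ _ (hu i j ρ hρ hj) ?_ (ha i j hj)
    have : ∑ k ∈ Finset.univ.erase i, b i k j * ρ k
        ≤ ∑ k ∈ Finset.univ.erase i, b i k j * σ k := by
      refine Finset.sum_le_sum fun k hk => ?_
      exact mul_le_mul_of_nonneg_left (hρσ k) (hb i k (Finset.ne_of_mem_erase hk) j hj).le
    linarith
  -- the affine upper bound d
  set d : Fin n → ℝ := fun i => Real.log 2 * ∑ j ∈ J i, (c i j + 1) / a i j with hd
  have hdpos : ∀ i, 0 < d i := by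
    intro i
    refine mul_pos hl2 (Finset.sum_pos (fun j hj => ?_) (hJ i))
    exact div_pos (by linarith [hc i j hj]) (ha i j hj)
  -- key bound: f i ρ ≤ ∑ H i k ρ k + d i
  have boundA : ∀ (ρ : Fin n → ℝ), (∀ k, 0 ≤ ρ k) → ∀ i,
      f i ρ ≤ (∑ k ∈ Finset.univ.erase i, H i k * ρ k) + d i := by
    intro ρ hρ i
    rw [hf]
    have step1 : ∀ j ∈ J i,
        1 / (a i j * Real.logb 2
          (1 + 1 / (∑ k ∈ Finset.univ.erase i, b i k j * ρ k + c i j)))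
        ≤ Real.log 2 * ((∑ k ∈ Finset.univ.erase i, b i k j * ρ k) / a i j)
          + Real.log 2 * ((c i j + 1) / a i j) := by
      intro j hj
      have := aux_pixel _ _ (hu i j ρ hρ hj) (ha i j hj)
      calc 1 / (a i j * Real.logb 2
            (1 + 1 / (∑ k ∈ Finset.univ.erase i, b i k j * ρ k + c i j)))
          ≤ Real.log 2 * (((∑ k ∈ Finset.univ.erase i, b i k j * ρ k + c i j) + 1) / a i j) := this
        _ = Real.log 2 * ((∑ k ∈ Finset.univ.erase i, b i k j * ρ k) / a i j)
            + Real.log 2 * ((c i j + 1) / a i j) := by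
            rw [← mul_add, ← add_div]; ring_nf
    calc (∑ j ∈ J i, 1 / (a i j * Real.logb 2
            (1 + 1 / (∑ k ∈ Finset.univ.erase i, b i k j * ρ k + c i j))))
        ≤ ∑ j ∈ J i, (Real.log 2 * ((∑ k ∈ Finset.univ.erase i, b i k j * ρ k) / a i j)
            + Real.log 2 * ((c i j + 1) / a i j)) := Finset.sum_le_sum step1
      _ = (∑ j ∈ J i, Real.log 2 * ((∑ k ∈ Finset.univ.erase i, b i k j * ρ k) / a i j))
          + ∑ j ∈ J i, Real.log 2 * ((c i j + 1) / a i j) := Finset.sum_add_distrib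
      _ = (∑ k ∈ Finset.univ.erase i, H i k * ρ k) + d i := by
          congr 1
          · have e1 : ∀ j ∈ J i,
                Real.log 2 * ((∑ k ∈ Finset.univ.erase i, b i k j * ρ k) / a i j)
                = ∑ k ∈ Finset.univ.erase i, Real.log 2 * (b i k j / a i j) * ρ k := by
              intro j _
              rw [Finset.sum_div, Finset.mul_sum]
              exact Finset.sum_congr rfl fun k _ => by ring
            rw [Finset.sum_congr rfl e1, Finset.sum_comm]
            refine Finset.sum_congr rfl fun k _ => ?_
            rw [hH, Finset.mul_sum, Finset.sum_mul]
          · simp only [hd]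
            rw [Finset.mul_sum]
  -- positivity of f i 0
  have hf0pos : ∀ i, 0 < f i 0 := by
    intro i
    rw [hf]
    refine Finset.sum_pos (fun j hj => ?_) (hJ i)
    have h1 := aux_logb_pos _ (hu i j 0 (fun _ => le_rfl) hj)
    have h2 := ha i j hj
    positivity
  -- choose the scaling factor M
  set M : ℝ := Finset.univ.sup' Finset.univ_nonempty (fun i => d i / f i 0) with hMdef
  have hM : ∀ i, d i ≤ M * f i 0 := by
    intro i
    have h1 : d i / f i 0 ≤ M := by
      rw [hMdef]; exact Finset.le_sup' (fun i => d i / f i 0) (Finset.mem_univ i)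
    exact (div_le_iff₀ (hf0pos i)).mp h1
  have hM0 : 0 ≤ M := by
    obtain ⟨i0⟩ := hi0
    have h1 : d i0 / f i0 0 ≤ M := by
      rw [hMdef]; exact Finset.le_sup' (fun i => d i / f i 0) (Finset.mem_univ i0)
    have := div_pos (hdpos i0) (hf0pos i0)
    linarith
  set ρbar : Fin n → ℝ := fun k => M * ρ₀ k with hρbar
  have hρbarnn : ∀ k, 0 ≤ ρbar k := fun k => mul_nonneg hM0 (hρ₀ k)
  -- ρbar is a super-solution
  have hub : ∀ i, f i ρbar ≤ ρbar i := by
    intro i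
    have h1 := boundA ρbar hρbarnn i
    have h2 : ∑ k ∈ Finset.univ.erase i, H i k * ρbar k
        = M * ∑ k ∈ Finset.univ.erase i, H i k * ρ₀ k := by
      rw [Finset.mul_sum]
      exact Finset.sum_congr rfl fun k _ => by simp [hρbar]; ring
    have h3 : f i 0 + ∑ k ∈ Finset.univ.erase i, H i k * ρ₀ k = ρ₀ i := by
      rw [← hh0 i ρ₀]; exact hfix i
    have h4 := hM i
    calc f i ρbar ≤ (∑ k ∈ Finset.univ.erase i, H i k * ρbar k) + d i := h1
      _ = M * (ρ₀ i - f i 0) + d i := by rw [h2]; congr 2; linarith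
      _ ≤ M * ρ₀ i := by nlinarith
  -- Knaster–Tarski on [0, ρbar]
  haveI : Fact ((0 : Fin n → ℝ) ≤ ρbar) := ⟨fun k => hρbarnn k⟩
  let F : Set.Icc (0 : Fin n → ℝ) ρbar →o Set.Icc (0 : Fin n → ℝ) ρbar :=
    { toFun := fun x => ⟨fun i => f i x.1,
        ⟨fun i => hfnn x.1 (fun k => x.2.1 k) i,
         fun i => le_trans (hmono x.1 ρbar (fun k => x.2.1 k) (fun k => x.2.2 k) i) (hub i)⟩⟩
      monotone' := by
        intro x y hxy
        intro i
        exact hmono x.1 y.1 (fun k => x.2.1 k) (fun k => hxy k) i }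
  have hfp := OrderHom.map_lfp F
  refine ⟨(OrderHom.lfp F).1, fun i => (OrderHom.lfp F).2.1 i, fun i => ?_⟩
  exact congrFun (congrArg Subtype.val hfp) i
end

section
/- (Exact characterization of feasibility) The load-coupling system ρ = f(ρ) has a nonnegative solution if and only if the linear system ρ = h⁰(ρ) has a nonnegative solution. -/
open Real Set

lemma L0 (v : ℝ) (hv : 1 ≤ v) : 2 * Real.log v ≤ v - v⁻¹ := by
  set F : ℝ → ℝ := fun x => x - x⁻¹ - 2 * Real.log x with hF
  have hder : ∀ x ∈ interior (Set.Icc (1:ℝ) v), HasDerivAt F (1 + (x^2)⁻¹ - 2 * x⁻¹) x := by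
    intro x hx
    rw [interior_Icc] at hx
    have hx0 : (0:ℝ) < x := lt_trans one_pos hx.1
    have h2 : HasDerivAt (fun x : ℝ => x⁻¹) (-(x^2)⁻¹) x := by
      simpa using (hasDerivAt_inv (ne_of_gt hx0))
    have h3 : HasDerivAt Real.log x⁻¹ x := Real.hasDerivAt_log (ne_of_gt hx0)
    have := ((hasDerivAt_id x).sub h2).sub (h3.const_mul 2)
    exact this.congr_deriv (by ring)
  have hmono : MonotoneOn F (Set.Icc 1 v) := by
    apply monotoneOn_of_deriv_nonneg (convex_Icc 1 v)
    · apply ContinuousOn.sub (ContinuousOn.sub continuousOn_id ?_) ?_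
      · exact ContinuousOn.inv₀ continuousOn_id (fun x hx => by
          have : (1:ℝ) ≤ x := hx.1; positivity)
      · exact (continuousOn_const.mul (Real.continuousOn_log.mono (fun x hx => by
          have : (1:ℝ) ≤ x := hx.1; simp; positivity)))
    · intro x hx
      exact (hder x hx).differentiableAt.differentiableWithinAt
    · intro x hx
      rw [(hder x hx).deriv]
      rw [interior_Icc] at hx
      have hx0 : (0:ℝ) < x := lt_trans one_pos hx.1
      have h4 : (1 - x⁻¹)^2 = 1 + (x^2)⁻¹ - 2 * x⁻¹ := by
        field_simp; ring
      rw [← h4]; positivity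
  have := hmono (Set.left_mem_Icc.2 hv) (Set.right_mem_Icc.2 hv) hv
  simp only [hF, Real.log_one] at this
  simp at this
  linarith

lemma L1 (y : ℝ) (hy : 0 < y) : (Real.log (1 + 1/y))^2 * (y * (y+1)) ≤ 1 := by
  set v : ℝ := Real.sqrt ((y+1)/y) with hv
  have hfrac : (1:ℝ) ≤ (y+1)/y := by rw [le_div_iff₀ hy]; linarith
  have hv1 : 1 ≤ v := by rw [hv]; simpa using Real.one_le_sqrt.2 hfrac
  have hv0 : 0 < v := lt_of_lt_of_le one_pos hv1
  have h1 : 1 + 1/y = (y+1)/y := by field_simp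
  have hlog : Real.log (1 + 1/y) = 2 * Real.log v := by
    rw [h1, hv, Real.log_sqrt (by positivity)]; ring
  have key := L0 v hv1
  have hL0 : 0 ≤ Real.log (1 + 1/y) := Real.log_nonneg (by
    have : 0 < 1/y := by positivity
    linarith)
  have hsq : v^2 = (y+1)/y := Real.sq_sqrt (by positivity)
  have h2 : Real.log (1 + 1/y)^2 ≤ (v - v⁻¹)^2 :=
    pow_le_pow_left₀ hL0 (by rw [hlog] at *; linarith) 2
  have h3 : (v - v⁻¹)^2 * (y * (y+1)) = 1 := by
    have hvne : v ≠ 0 := ne_of_gt hv0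
    have hyne : y ≠ 0 := ne_of_gt hy
    have hy1ne : y + 1 ≠ 0 := by positivity
    have e1 : (v - v⁻¹)^2 = v^2 - 2 + (v^2)⁻¹ := by field_simp; ring
    rw [e1, hsq]
    field_simp
    ring
  calc Real.log (1 + 1/y)^2 * (y * (y+1)) ≤ (v - v⁻¹)^2 * (y * (y+1)) := by
        apply mul_le_mul_of_nonneg_right h2 (by positivity)
    _ = 1 := h3

lemma L2 (c d : ℝ) (hc : 0 < c) (hcd : c ≤ d) :
    (Real.log (1 + 1/c))⁻¹ - c ≤ (Real.log (1 + 1/d))⁻¹ - d := by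
  set φ : ℝ → ℝ := fun y => (Real.log (1 + 1/y))⁻¹ - y with hφ
  have hLpos : ∀ y : ℝ, 0 < y → 0 < Real.log (1 + 1/y) := by
    intro y hy
    apply Real.log_pos
    have : 0 < 1/y := by positivity
    linarith
  have hder : ∀ y : ℝ, 0 < y →
      HasDerivAt φ (((y^2)⁻¹ / (1 + 1/y)) / (Real.log (1 + 1/y))^2 - 1) y := by
    intro y hy
    have hyne : y ≠ 0 := ne_of_gt hy
    have hu : HasDerivAt (fun y : ℝ => 1 + 1/y) (-(y^2)⁻¹) y := by
      simpa using (hasDerivAt_inv hyne).const_add 1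
    have hupos : 0 < 1 + 1/y := by positivity
    have hL : HasDerivAt (fun y : ℝ => Real.log (1 + 1/y)) (-(y^2)⁻¹ / (1 + 1/y)) y :=
      ((Real.hasDerivAt_log (ne_of_gt hupos)).comp y hu :) |>.congr_deriv (by field_simp)
    have hLne : Real.log (1 + 1/y) ≠ 0 := ne_of_gt (hLpos y hy)
    have hinv : HasDerivAt (fun y : ℝ => (Real.log (1 + 1/y))⁻¹)
        (-(-(y^2)⁻¹ / (1 + 1/y)) / (Real.log (1 + 1/y))^2) y := hL.inv hLne
    have := hinv.sub (hasDerivAt_id y)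
    exact this.congr_deriv (by ring)
  have hmono : MonotoneOn φ (Set.Icc c d) := by
    apply monotoneOn_of_deriv_nonneg (convex_Icc c d)
    · intro y hy
      exact (hder y (lt_of_lt_of_le hc hy.1)).continuousAt.continuousWithinAt
    · intro y hy
      rw [interior_Icc] at hy
      exact (hder y (lt_of_lt_of_le hc hy.1.le)).differentiableAt.differentiableWithinAt
    · intro y hy
      rw [interior_Icc] at hy
      have hy0 : 0 < y := lt_of_lt_of_le hc hy.1.le
      rw [(hder y hy0).deriv]
      have hL := hLpos y hy0
      have hL1 := L1 y hy0
      have hA : (y^2)⁻¹ / (1 + 1/y) = (y * (y+1))⁻¹ := by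
        field_simp
      rw [hA]
      have h5 : Real.log (1 + 1/y)^2 ≤ (y * (y+1))⁻¹ := by
        rw [inv_eq_one_div, le_div_iff₀ (by positivity)]
        exact hL1
      rw [sub_nonneg, le_div_iff₀ (by positivity), one_mul]
      exact h5
  have := hmono (Set.left_mem_Icc.2 hcd) (Set.right_mem_Icc.2 hcd) hcd
  simpa [hφ] using this

lemma L3 {n : ℕ} (F : (Fin n → ℝ) → (Fin n → ℝ)) (t : Fin n → ℝ)
    (ht : ∀ i, 0 ≤ t i)
    (hmono : ∀ x y : Fin n → ℝ, (∀ i, 0 ≤ x i) → (∀ i, x i ≤ y i) → (∀ i, y i ≤ t i) →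
      ∀ i, F x i ≤ F y i)
    (hpos : ∀ x : Fin n → ℝ, (∀ i, 0 ≤ x i) → (∀ i, x i ≤ t i) → ∀ i, 0 ≤ F x i)
    (htop : ∀ i, F t i ≤ t i) :
    ∃ ρ : Fin n → ℝ, (∀ i, 0 ≤ ρ i) ∧ ∀ i, F ρ i = ρ i := by
  set S : Set (Fin n → ℝ) :=
    {x | (∀ i, 0 ≤ x i) ∧ (∀ i, x i ≤ t i) ∧ ∀ i, F x i ≤ x i} with hS
  have htS : t ∈ S := ⟨ht, fun i => le_rfl, htop⟩
  set m : Fin n → ℝ := fun i => sInf ((fun x => x i) '' S) with hm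
  have hne : ∀ i : Fin n, ((fun x : Fin n → ℝ => x i) '' S).Nonempty :=
    fun i => ⟨t i, ⟨t, htS, rfl⟩⟩
  have hbdd : ∀ i : Fin n, BddBelow ((fun x : Fin n → ℝ => x i) '' S) := by
    intro i
    exact ⟨0, fun r ⟨x, hx, hr⟩ => hr ▸ hx.1 i⟩
  have hm0 : ∀ i, 0 ≤ m i := by
    intro i
    exact le_csInf (hne i) (fun r ⟨x, hx, hr⟩ => hr ▸ hx.1 i)
  have hmle : ∀ x ∈ S, ∀ i, m i ≤ x i := by
    intro x hx i
    exact csInf_le (hbdd i) ⟨x, hx, rfl⟩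
  have hmt : ∀ i, m i ≤ t i := hmle t htS
  have hFm_le : ∀ i, F m i ≤ m i := by
    intro i
    apply le_csInf (hne i)
    rintro r ⟨x, hx, rfl⟩
    calc F m i ≤ F x i := hmono m x hm0 (hmle x hx) hx.2.1 i
      _ ≤ x i := hx.2.2 i
  have hFmS : F m ∈ S := by
    refine ⟨hpos m hm0 hmt, fun i => le_trans (hFm_le i) (hmt i), ?_⟩
    intro i
    exact hmono (F m) m (hpos m hm0 hmt) hFm_le hmt i
  have hle : ∀ i, m i ≤ F m i := hmle (F m) hFmS
  exact ⟨m, hm0, fun i => le_antisymm (hFm_le i) (hle i)⟩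


/-- Exact characterization of feasibility: the load-coupling system `ρ = f(ρ)`
has a nonnegative solution iff the linear system `ρ = h⁰(ρ)` does. -/
theorem stmt_16
    (n : ℕ) (hn : 2 ≤ n)
    (J : Fin n → Finset ℕ) (hJ : ∀ i, (J i).Nonempty)
    (a c : Fin n → ℕ → ℝ) (b : Fin n → Fin n → ℕ → ℝ)
    (ha : ∀ i, ∀ j ∈ J i, 0 < a i j)
    (hc : ∀ i, ∀ j ∈ J i, 0 < c i j)
    (hb : ∀ i k, k ≠ i → ∀ j ∈ J i, 0 < b i k j)
    (f : Fin n → (Fin n → ℝ) → ℝ)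
    (hf : ∀ i ρ, f i ρ =
      ∑ j ∈ J i, 1 / (a i j * Real.logb 2
        (1 + 1 / (∑ k ∈ Finset.univ.erase i, b i k j * ρ k + c i j))))
    (H : Fin n → Fin n → ℝ)
    (hH : ∀ i k, H i k = Real.log 2 * ∑ j ∈ J i, b i k j / a i j)
    (h0 : Fin n → (Fin n → ℝ) → ℝ)
    (hh0 : ∀ i ρ, h0 i ρ =
      f i 0 + ∑ k ∈ Finset.univ.erase i, H i k * ρ k) :
    (∃ ρ : Fin n → ℝ, (∀ i, 0 ≤ ρ i) ∧ ∀ i, f i ρ = ρ i) ↔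
    (∃ ρ : Fin n → ℝ, (∀ i, 0 ≤ ρ i) ∧ ∀ i, h0 i ρ = ρ i) := by
  have hlog2 : (0:ℝ) < Real.log 2 := Real.log_pos one_lt_two
  have hterm : ∀ A z : ℝ, 1 / (A * Real.logb 2 z) = Real.log 2 / (A * Real.log z) := by
    intro A z
    rw [Real.logb, ← mul_div_assoc, one_div_div]
  have hf_formula : ∀ (ρ : Fin n → ℝ) (i : Fin n), f i ρ =
      ∑ j ∈ J i, Real.log 2 / (a i j *
        Real.log (1 + 1 / (∑ k ∈ Finset.univ.erase i, b i k j * ρ k + c i j))) := by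
    intro ρ i
    rw [hf]
    exact Finset.sum_congr rfl fun j hj => hterm _ _
  have hf0 : ∀ i, f i 0 = ∑ j ∈ J i, Real.log 2 / (a i j * Real.log (1 + 1 / c i j)) := by
    intro i
    rw [hf_formula]
    apply Finset.sum_congr rfl
    intro j hj
    norm_num
  have hT0 : ∀ (ρ : Fin n → ℝ), (∀ i, 0 ≤ ρ i) → ∀ i j,
      j ∈ J i → 0 ≤ ∑ k ∈ Finset.univ.erase i, b i k j * ρ k := by
    intro ρ hρ i j hj
    apply Finset.sum_nonneg
    intro k hk
    exact mul_nonneg (hb i k (Finset.ne_of_mem_erase hk) j hj).le (hρ k)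
  have hLpos : ∀ S : ℝ, 0 < S → 0 < Real.log (1 + 1 / S) := by
    intro S hS
    apply Real.log_pos
    have : 0 < 1 / S := by positivity
    linarith
  -- positivity of f
  have hfpos : ∀ (ρ : Fin n → ℝ), (∀ i, 0 ≤ ρ i) → ∀ i, 0 < f i ρ := by
    intro ρ hρ i
    rw [hf_formula]
    apply Finset.sum_pos _ (hJ i)
    intro j hj
    have hS : 0 < ∑ k ∈ Finset.univ.erase i, b i k j * ρ k + c i j :=
      add_pos_of_nonneg_of_pos (hT0 ρ hρ i j hj) (hc i j hj)
    have := hLpos _ hS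
    have := ha i j hj
    positivity
  -- monotonicity of f
  have hfmono : ∀ x y : Fin n → ℝ, (∀ i, 0 ≤ x i) → (∀ i, x i ≤ y i) →
      ∀ i, f i x ≤ f i y := by
    intro x y hx hxy i
    rw [hf_formula, hf_formula]
    apply Finset.sum_le_sum
    intro j hj
    have hy : ∀ k, 0 ≤ y k := fun k => le_trans (hx k) (hxy k)
    have hSx : 0 < ∑ k ∈ Finset.univ.erase i, b i k j * x k + c i j :=
      add_pos_of_nonneg_of_pos (hT0 x hx i j hj) (hc i j hj)
    have hSy : 0 < ∑ k ∈ Finset.univ.erase i, b i k j * y k + c i j :=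
      add_pos_of_nonneg_of_pos (hT0 y hy i j hj) (hc i j hj)
    have hSxy : (∑ k ∈ Finset.univ.erase i, b i k j * x k + c i j) ≤
        ∑ k ∈ Finset.univ.erase i, b i k j * y k + c i j := by
      apply add_le_add_left
      apply Finset.sum_le_sum
      intro k hk
      exact mul_le_mul_of_nonneg_left (hxy k) (hb i k (Finset.ne_of_mem_erase hk) j hj).le
    have hLy := hLpos _ hSy
    have haij := ha i j hj
    gcongr
  -- swap lemma
  have hswap : ∀ (ρ : Fin n → ℝ) (i : Fin n),
      ∑ k ∈ Finset.univ.erase i, H i k * ρ k =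
      ∑ j ∈ J i, Real.log 2 / a i j * ∑ k ∈ Finset.univ.erase i, b i k j * ρ k := by
    intro ρ i
    calc ∑ k ∈ Finset.univ.erase i, H i k * ρ k
        = ∑ k ∈ Finset.univ.erase i, ∑ j ∈ J i,
            Real.log 2 / a i j * (b i k j * ρ k) := by
          apply Finset.sum_congr rfl
          intro k _
          rw [hH, Finset.mul_sum, Finset.sum_mul]
          apply Finset.sum_congr rfl
          intro j _
          ring
      _ = ∑ j ∈ J i, ∑ k ∈ Finset.univ.erase i,
            Real.log 2 / a i j * (b i k j * ρ k) := Finset.sum_comm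
      _ = ∑ j ∈ J i, Real.log 2 / a i j * ∑ k ∈ Finset.univ.erase i, b i k j * ρ k := by
          apply Finset.sum_congr rfl
          intro j _
          rw [Finset.mul_sum]
  -- Inequality A : h0 ≤ f on the nonnegative orthant
  have hA : ∀ (ρ : Fin n → ℝ), (∀ i, 0 ≤ ρ i) → ∀ i, h0 i ρ ≤ f i ρ := by
    intro ρ hρ i
    rw [hh0, hf0, hswap, ← Finset.sum_add_distrib, hf_formula]
    apply Finset.sum_le_sum
    intro j hj
    set t := ∑ k ∈ Finset.univ.erase i, b i k j * ρ k with hts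
    have ht : 0 ≤ t := hT0 ρ hρ i j hj
    have hcj := hc i j hj
    have haij := ha i j hj
    have hkey := L2 (c i j) (t + c i j) hcj (by linarith)
    have hLc := hLpos _ hcj
    have hLt := hLpos _ (show (0:ℝ) < t + c i j by linarith)
    have e1 : (Real.log (1 + 1 / c i j))⁻¹ + t ≤ (Real.log (1 + 1 / (t + c i j)))⁻¹ := by
      linarith
    have e2 : Real.log 2 / (a i j * Real.log (1 + 1 / c i j)) + Real.log 2 / a i j * t ≤
        Real.log 2 / (a i j * Real.log (1 + 1 / (t + c i j))) := by
      have h3 : ∀ L : ℝ, Real.log 2 / (a i j * L) = Real.log 2 / a i j * L⁻¹ := by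
        intro L
        rw [← div_div, div_eq_mul_inv]
      rw [h3, h3, ← mul_add]
      apply mul_le_mul_of_nonneg_left e1 (by positivity)
    calc Real.log 2 / (a i j * Real.log (1 + 1 / c i j)) + Real.log 2 / a i j * t
        ≤ Real.log 2 / (a i j * Real.log (1 + 1 / (t + c i j))) := e2
      _ = Real.log 2 / (a i j * Real.log (1 + 1 /
            (∑ k ∈ Finset.univ.erase i, b i k j * ρ k + c i j))) := by rw [← hts]
  -- Inequality B : f ρ ≤ H ρ + e
  have hB : ∀ (ρ : Fin n → ℝ), (∀ i, 0 ≤ ρ i) → ∀ i, f i ρ ≤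
      (∑ k ∈ Finset.univ.erase i, H i k * ρ k) +
      Real.log 2 * ∑ j ∈ J i, (c i j + 1) / a i j := by
    intro ρ hρ i
    rw [hf_formula, hswap, Finset.mul_sum, ← Finset.sum_add_distrib]
    apply Finset.sum_le_sum
    intro j hj
    set t := ∑ k ∈ Finset.univ.erase i, b i k j * ρ k with hts
    have ht : 0 ≤ t := hT0 ρ hρ i j hj
    have hcj := hc i j hj
    have haij := ha i j hj
    have hS : (0:ℝ) < t + c i j := by linarith
    have hLt := hLpos _ hS
    -- log (1 + 1/S) ≥ 1/(S+1)
    have hlb : (t + c i j + 1)⁻¹ ≤ Real.log (1 + 1 / (t + c i j)) := by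
      have h1 : Real.log ((t + c i j) / (t + c i j + 1)) ≤
          (t + c i j) / (t + c i j + 1) - 1 :=
        Real.log_le_sub_one_of_pos (by positivity)
      have h2 : Real.log ((t + c i j) / (t + c i j + 1)) =
          - Real.log (1 + 1 / (t + c i j)) := by
        rw [← Real.log_inv]
        congr 1
        field_simp
      have h3 : (t + c i j) / (t + c i j + 1) - 1 = - (t + c i j + 1)⁻¹ := by
        field_simp
        ring
      rw [h2, h3] at h1
      linarith
    have hinv : (Real.log (1 + 1 / (t + c i j)))⁻¹ ≤ t + c i j + 1 := by
      rw [inv_le_comm₀ hLt (by positivity)] at *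
      · exact hlb
    calc Real.log 2 / (a i j * Real.log (1 + 1 / (t + c i j)))
        = Real.log 2 / a i j * (Real.log (1 + 1 / (t + c i j)))⁻¹ := by
          rw [division_def, division_def, mul_inv]
          ring
      _ ≤ Real.log 2 / a i j * (t + c i j + 1) := by
          apply mul_le_mul_of_nonneg_left hinv (by positivity)
      _ = Real.log 2 / a i j * t + Real.log 2 * ((c i j + 1) / a i j) := by
          field_simp
          ring
  -- nonnegativity of H
  have hHk : ∀ i k, k ≠ i → 0 ≤ H i k := by
    intro i k hki
    rw [hH]
    apply mul_nonneg hlog2.le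
    apply Finset.sum_nonneg
    intro j hj
    exact div_nonneg (hb i k hki j hj).le (ha i j hj).le
  constructor
  · rintro ⟨rhoh, hrhoh0, hfix⟩
    have := L3 (fun ρ i => h0 i ρ) rhoh hrhoh0 ?_ ?_ ?_
    · obtain ⟨ρ, h1, h2⟩ := this
      exact ⟨ρ, h1, h2⟩
    · intro x y hx hxy hyt i
      show h0 i x ≤ h0 i y
      rw [hh0, hh0]
      apply add_le_add_right
      apply Finset.sum_le_sum
      intro k hk
      exact mul_le_mul_of_nonneg_left (hxy k) (hHk i k (Finset.ne_of_mem_erase hk))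
    · intro x hx hxt i
      show 0 ≤ h0 i x
      rw [hh0]
      have h1 : (0:ℝ) ≤ ∑ k ∈ Finset.univ.erase i, H i k * x k := by
        apply Finset.sum_nonneg
        intro k hk
        exact mul_nonneg (hHk i k (Finset.ne_of_mem_erase hk)) (hx k)
      have h2 := hfpos 0 (fun _ => le_rfl) i
      linarith
    · intro i
      calc h0 i rhoh ≤ f i rhoh := hA rhoh hrhoh0 i
        _ = rhoh i := hfix i
  · rintro ⟨ρs, hρs0, hfix⟩
    have : Nonempty (Fin n) := ⟨⟨0, by omega⟩⟩
    set q : Fin n → ℝ := fun i => f i 0 with hq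
    have hqpos : ∀ i, 0 < q i := fun i => hfpos 0 (fun _ => le_rfl) i
    set e : Fin n → ℝ := fun i => Real.log 2 * ∑ j ∈ J i, (c i j + 1) / a i j with he
    have hepos : ∀ i, 0 < e i := by
      intro i
      apply mul_pos hlog2
      apply Finset.sum_pos _ (hJ i)
      intro j hj
      have := hc i j hj
      have := ha i j hj
      positivity
    set lam : ℝ := Finset.univ.sup' Finset.univ_nonempty (fun i => e i / q i) with hlam
    have hlamge : ∀ i, e i / q i ≤ lam := fun i => by
      rw [hlam]
      exact Finset.le_sup' (fun i => e i / q i) (Finset.mem_univ i)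
    have hlampos : 0 < lam := by
      obtain ⟨i⟩ := ‹Nonempty (Fin n)›
      have h1 : 0 < e i / q i := div_pos (hepos i) (hqpos i)
      exact lt_of_lt_of_le h1 (hlamge i)
    have helam : ∀ i, e i ≤ lam * q i := by
      intro i
      have := (div_le_iff₀ (hqpos i)).1 (hlamge i)
      linarith
    set top : Fin n → ℝ := fun i => lam * ρs i with htops
    have htop0 : ∀ i, 0 ≤ top i := fun i => mul_nonneg hlampos.le (hρs0 i)
    have := L3 (fun ρ i => f i ρ) top htop0 ?_ ?_ ?_
    · obtain ⟨ρ, h1, h2⟩ := this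
      exact ⟨ρ, h1, h2⟩
    · intro x y hx hxy hyt i
      exact hfmono x y hx hxy i
    · intro x hx hxt i
      exact (hfpos x hx i).le
    · intro i
      have step1 := hB top htop0 i
      have step2 : ∑ k ∈ Finset.univ.erase i, H i k * top k =
          lam * ∑ k ∈ Finset.univ.erase i, H i k * ρs k := by
        rw [Finset.mul_sum]
        apply Finset.sum_congr rfl
        intro k _
        simp only [htops]
        ring
      have step3 : h0 i ρs = ρs i := hfix i
      rw [hh0] at step3
      calc f i top ≤ (∑ k ∈ Finset.univ.erase i, H i k * top k) + e i := step1
        _ = lam * (∑ k ∈ Finset.univ.erase i, H i k * ρs k) + e i := by rw [step2]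
        _ ≤ lam * (∑ k ∈ Finset.univ.erase i, H i k * ρs k) + lam * q i := by
            linarith [helam i]
        _ = lam * (q i + ∑ k ∈ Finset.univ.erase i, H i k * ρs k) := by ring
        _ = lam * ρs i := by rw [hq]; simp only []; rw [← step3]
        _ = top i := rfl
end

section
/- The set {ρ ∈ ℝ^n : ρ_i ≥ 0 and ρ_i ≤ f_i(ρ) for every cell i} is a convex subset of ℝ^n. -/
open Real Set

/-- `log u ≥ 2(u-1)/(u+1)` for `u ≥ 1`. -/
lemma aux_log_ge {u : ℝ} (hu : 1 ≤ u) : 2*(u-1)/(u+1) ≤ Real.log u := by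
  set F : ℝ → ℝ := fun u => Real.log u - 2*(u-1)/(u+1) with hF
  have hder : ∀ v : ℝ, 1 ≤ v → HasDerivAt F (v⁻¹ - 4/(v+1)^2) v := by
    intro v hv
    have hv0 : v ≠ 0 := by intro h; rw [h] at hv; linarith
    have hv1 : v + 1 ≠ 0 := by intro h; nlinarith
    have h1 : HasDerivAt Real.log v⁻¹ v := Real.hasDerivAt_log hv0
    have h2 : HasDerivAt (fun u : ℝ => 2*(u-1)/(u+1)) (4/(v+1)^2) v := by
      have hnum : HasDerivAt (fun u : ℝ => 2*(u-1)) 2 v := by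
        simpa using (((hasDerivAt_id v).sub_const 1).const_mul (2:ℝ))
      have hden : HasDerivAt (fun u : ℝ => u+1) 1 v := (hasDerivAt_id v).add_const 1
      have := hnum.div hden hv1
      refine this.congr_deriv ?_
      field_simp
      ring
    exact h1.sub h2
  have hmono : MonotoneOn F (Set.Ici 1) := by
    apply monotoneOn_of_deriv_nonneg (convex_Ici 1)
    · intro v hv
      exact ((hder v hv).differentiableAt.continuousAt).continuousWithinAt
    · rw [interior_Ici]
      intro v hv
      exact ((hder v (le_of_lt hv)).differentiableAt).differentiableWithinAt
    · rw [interior_Ici]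
      intro v hv
      rw [(hder v hv.le).deriv]
      have hv0 : (0:ℝ) < v := lt_trans one_pos hv
      rw [sub_nonneg, inv_eq_one_div,
        div_le_div_iff₀ (by positivity) (by positivity)]
      nlinarith [sq_nonneg (v-1)]
  have h1 : F 1 = 0 := by simp [hF]
  have h2 := hmono (Set.self_mem_Ici) hu hu
  rw [h1] at h2
  simpa [hF, sub_nonneg] using h2

lemma aux_key {x : ℝ} (hx : 0 < x) : 2/(2*x+1) ≤ Real.log (1 + x⁻¹) := by
  have hxi : 0 < x⁻¹ := inv_pos.2 hx
  have h := aux_log_ge (u := 1 + x⁻¹) (by linarith)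
  have heq : 2*((1 + x⁻¹)-1)/((1 + x⁻¹)+1) = 2/(2*x+1) := by
    rw [div_eq_div_iff (by linarith) (by linarith)]
    field_simp
    ring
  rwa [heq] at h

lemma aux_L_pos {x : ℝ} (hx : 0 < x) : 0 < Real.log (1 + x⁻¹) :=
  Real.log_pos (by linarith [inv_pos.2 hx])

/-- derivative of `L(x) = log(1+1/x)` -/
lemma aux_hL {x : ℝ} (hx : 0 < x) :
    HasDerivAt (fun y : ℝ => Real.log (1 + y⁻¹)) ((-(x^2)⁻¹) / (1 + x⁻¹)) x := by
  have h0 : (0:ℝ) < 1 + x⁻¹ := by have := inv_pos.2 hx; linarith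
  have h1 : HasDerivAt (fun y : ℝ => 1 + y⁻¹) (-(x^2)⁻¹) x :=
    (hasDerivAt_inv hx.ne').const_add 1
  exact h1.log h0.ne'

/-- derivative of `φ(x) = (log(1+1/x))⁻¹` -/
lemma aux_hphi {x : ℝ} (hx : 0 < x) :
    HasDerivAt (fun y : ℝ => (Real.log (1 + y⁻¹))⁻¹)
      ((x*(x+1)*(Real.log (1 + x⁻¹))^2)⁻¹) x := by
  have hL := aux_L_pos hx
  have h1 : (0:ℝ) < 1 + x⁻¹ := by have := inv_pos.2 hx; linarith
  have h := (aux_hL hx).inv hL.ne'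
  refine h.congr_deriv ?_
  set L := Real.log (1 + x⁻¹) with hLdef
  clear_value L
  field_simp

/-- derivative of `g(x) = (x(x+1)L(x)²)⁻¹` -/
lemma aux_hg {x : ℝ} (hx : 0 < x) :
    HasDerivAt (fun y : ℝ => (y*(y+1)*(Real.log (1 + y⁻¹))^2)⁻¹)
      (-((2*x+1)*(Real.log (1 + x⁻¹))^2 - 2*Real.log (1 + x⁻¹)) /
        (x*(x+1)*(Real.log (1 + x⁻¹))^2)^2) x := by
  have hL := aux_L_pos hx
  have h1' : (0:ℝ) < 1 + x⁻¹ := by have := inv_pos.2 hx; linarith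
  have h1 : HasDerivAt (fun y : ℝ => y*(y+1)) (1*(x+1) + x*1) x :=
    (hasDerivAt_id x).mul ((hasDerivAt_id x).add_const 1)
  have h2 : HasDerivAt (fun y : ℝ => (Real.log (1 + y⁻¹))^2)
      ((2:ℕ) * (Real.log (1 + x⁻¹))^1 * ((-(x^2)⁻¹) / (1 + x⁻¹))) x := (aux_hL hx).pow 2
  have hu : HasDerivAt (fun y : ℝ => y*(y+1)*(Real.log (1 + y⁻¹))^2)
      ((1*(x+1) + x*1) * (Real.log (1 + x⁻¹))^2 +
        (x*(x+1)) * ((2:ℕ) * (Real.log (1 + x⁻¹))^1 * ((-(x^2)⁻¹) / (1 + x⁻¹)))) x :=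
    h1.mul h2
  have hune : x*(x+1)*(Real.log (1 + x⁻¹))^2 ≠ 0 := by
    have : (0:ℝ) < x*(x+1)*(Real.log (1 + x⁻¹))^2 :=
      mul_pos (mul_pos hx (by linarith)) (pow_pos hL 2)
    exact this.ne'
  have h := hu.inv hune
  refine h.congr_deriv ?_
  set L := Real.log (1 + x⁻¹) with hLdef
  clear_value L
  push_cast
  rw [div_eq_div_iff (by positivity) (by positivity)]
  field_simp
  ring

lemma aux_concave :
    ConcaveOn ℝ (Set.Ioi (0:ℝ)) (fun x : ℝ => (Real.log (1 + x⁻¹))⁻¹) := by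
  apply concaveOn_of_hasDerivWithinAt2_nonpos (convex_Ioi 0)
    (f' := fun x => (x*(x+1)*(Real.log (1 + x⁻¹))^2)⁻¹)
    (f'' := fun x => -((2*x+1)*(Real.log (1 + x⁻¹))^2 - 2*Real.log (1 + x⁻¹)) /
        (x*(x+1)*(Real.log (1 + x⁻¹))^2)^2)
  · intro x hx
    exact ((aux_hphi hx).differentiableAt.continuousAt).continuousWithinAt
  · rw [interior_Ioi]
    intro x hx
    exact (aux_hphi hx).hasDerivWithinAt
  · rw [interior_Ioi]
    intro x hx
    exact (aux_hg hx).hasDerivWithinAt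
  · rw [interior_Ioi]
    intro x hx
    rw [Set.mem_Ioi] at hx
    have hL := aux_L_pos hx
    have hkey := aux_key hx
    have h2 : 2 ≤ (2*x+1) * Real.log (1 + x⁻¹) := by
      rw [div_le_iff₀ (by linarith : (0:ℝ) < 2*x+1)] at hkey
      linarith [hkey]
    have hnum : 0 ≤ (2*x+1)*(Real.log (1 + x⁻¹))^2 - 2*Real.log (1 + x⁻¹) := by
      nlinarith [hL]
    have hden : 0 < (x*(x+1)*(Real.log (1 + x⁻¹))^2)^2 := by
      have : (0:ℝ) < x*(x+1)*(Real.log (1 + x⁻¹))^2 :=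
        mul_pos (mul_pos hx (by linarith)) (pow_pos hL 2)
      positivity
    exact div_nonpos_of_nonpos_of_nonneg (by linarith) hden.le

/-- per-term concavity in the load-coupling function. -/
lemma aux_term_s17 {A x y t s : ℝ} (hA : 0 < A) (hx : 0 < x) (hy : 0 < y)
    (ht : 0 ≤ t) (hs : 0 ≤ s) (hts : t + s = 1) :
    t * (1/(A * Real.logb 2 (1 + 1/x))) + s * (1/(A * Real.logb 2 (1 + 1/y)))
      ≤ 1/(A * Real.logb 2 (1 + 1/(t*x + s*y))) := by
  have hxy : 0 < t*x + s*y := by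
    rcases eq_or_lt_of_le ht with h | h
    · have hs1 : s = 1 := by linarith
      rw [← h, hs1]; simpa using hy
    · have := mul_nonneg hs hy.le
      nlinarith
  have hlog2 : (0:ℝ) < Real.log 2 := Real.log_pos one_lt_two
  have hrw : ∀ z : ℝ, 0 < z →
      1/(A * Real.logb 2 (1 + 1/z)) = (Real.log 2 / A) * (Real.log (1 + z⁻¹))⁻¹ := by
    intro z hz
    have hL := aux_L_pos hz
    rw [one_div z, Real.logb]
    set Lz := Real.log (1 + z⁻¹) with hLz
    clear_value Lz
    field_simp
  have h := aux_concave.2 (Set.mem_Ioi.2 hx) (Set.mem_Ioi.2 hy) ht hs hts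
  simp only [smul_eq_mul] at h
  calc t * (1/(A * Real.logb 2 (1 + 1/x))) + s * (1/(A * Real.logb 2 (1 + 1/y)))
      = (Real.log 2 / A) * (t * (Real.log (1 + x⁻¹))⁻¹ + s * (Real.log (1 + y⁻¹))⁻¹) := by
        rw [hrw x hx, hrw y hy]; ring
    _ ≤ (Real.log 2 / A) * (Real.log (1 + (t*x + s*y)⁻¹))⁻¹ :=
        mul_le_mul_of_nonneg_left h (div_pos hlog2 hA).le
    _ = 1/(A * Real.logb 2 (1 + 1/(t*x + s*y))) := (hrw _ hxy).symm

/-- The set `{ρ ≥ 0 : ρ ≤ f(ρ)}` is convex. -/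
theorem stmt_17
    (n : ℕ) (hn : 2 ≤ n)
    (J : Fin n → Finset ℕ) (hJ : ∀ i, (J i).Nonempty)
    (a c : Fin n → ℕ → ℝ) (b : Fin n → Fin n → ℕ → ℝ)
    (ha : ∀ i, ∀ j ∈ J i, 0 < a i j)
    (hc : ∀ i, ∀ j ∈ J i, 0 < c i j)
    (hb : ∀ i k, k ≠ i → ∀ j ∈ J i, 0 < b i k j)
    (f : Fin n → (Fin n → ℝ) → ℝ)
    (hf : ∀ i ρ, f i ρ =
      ∑ j ∈ J i, 1 / (a i j * Real.logb 2
        (1 + 1 / (∑ k ∈ Finset.univ.erase i, b i k j * ρ k + c i j)))) :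
    Convex ℝ {ρ : Fin n → ℝ | ∀ i, 0 ≤ ρ i ∧ ρ i ≤ f i ρ} := by
  intro ρ hρ σ hσ t s ht hs hts
  simp only [Set.mem_setOf_eq] at hρ hσ ⊢
  intro i
  have hcomb : ∀ k, (t • ρ + s • σ) k = t * ρ k + s * σ k := by
    intro k; simp [smul_eq_mul]
  constructor
  · rw [hcomb i]
    exact add_nonneg (mul_nonneg ht (hρ i).1) (mul_nonneg hs (hσ i).1)
  · have hXpos : ∀ (τ : Fin n → ℝ), (∀ k, 0 ≤ τ k) → ∀ j ∈ J i,
        0 < ∑ k ∈ Finset.univ.erase i, b i k j * τ k + c i j := by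
      intro τ hτ j hj
      have hsum : 0 ≤ ∑ k ∈ Finset.univ.erase i, b i k j * τ k :=
        Finset.sum_nonneg fun k hk =>
          mul_nonneg (hb i k (Finset.ne_of_mem_erase hk) j hj).le (hτ k)
      have := hc i j hj
      linarith
    have hXaff : ∀ j, (∑ k ∈ Finset.univ.erase i, b i k j * (t • ρ + s • σ) k + c i j)
        = t * (∑ k ∈ Finset.univ.erase i, b i k j * ρ k + c i j)
          + s * (∑ k ∈ Finset.univ.erase i, b i k j * σ k + c i j) := by
      intro j
      have hsum : ∑ k ∈ Finset.univ.erase i, b i k j * (t • ρ + s • σ) k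
          = t * (∑ k ∈ Finset.univ.erase i, b i k j * ρ k)
            + s * (∑ k ∈ Finset.univ.erase i, b i k j * σ k) := by
        rw [Finset.mul_sum, Finset.mul_sum, ← Finset.sum_add_distrib]
        refine Finset.sum_congr rfl fun k _ => ?_
        rw [hcomb k]; ring
      rw [hsum]
      linear_combination (-(c i j)) * hts
    calc (t • ρ + s • σ) i = t * ρ i + s * σ i := hcomb i
      _ ≤ t * f i ρ + s * f i σ :=
        add_le_add (mul_le_mul_of_nonneg_left (hρ i).2 ht)
          (mul_le_mul_of_nonneg_left (hσ i).2 hs)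
      _ ≤ f i (t • ρ + s • σ) := by
        rw [hf i ρ, hf i σ, hf i (t • ρ + s • σ),
          Finset.mul_sum, Finset.mul_sum, ← Finset.sum_add_distrib]
        refine Finset.sum_le_sum fun j hj => ?_
        rw [hXaff j]
        exact aux_term_s17 (ha i j hj) (hXpos ρ (fun k => (hρ k).1) j hj)
          (hXpos σ (fun k => (hσ k).1) j hj) ht hs hts
end

section
/- (The fixed point is the unique maximizer of the total load) Suppose ρ* ≥ 0 satisfies f_i(ρ*) = ρ*_i for every cell i. Then for every ρ ∈ ℝ_{≥0}^n with ρ_i ≤ f_i(ρ) for all i, one has Σ_{i=1}^n ρ_i ≤ Σ_{i=1}^n ρ*_i, and equality holds only if ρ = ρ*. -/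
/-- Key scalability inequality: for `S ≥ 0`, `c > 0`, `t > 1`,
`logb 2 (1 + 1/(S+c)) < t * logb 2 (1 + 1/(t*S+c))`. -/
lemma key_scal (S c t : ℝ) (hS : 0 ≤ S) (hc : 0 < c) (ht : 1 < t) :
    Real.logb 2 (1 + 1 / (S + c)) < t * Real.logb 2 (1 + 1 / (t * S + c)) := by
  have hv : 0 < S + c := by linarith
  have hu : 0 < t * S + c := by nlinarith
  have h1 : 1 / (S + c) < t * (1 / (t * S + c)) := by
    rw [mul_one_div, div_lt_div_iff₀ hv hu]
    nlinarith
  have h2 : 1 + t * (1 / (t * S + c)) ≤ (1 + 1 / (t * S + c)) ^ t := by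
    apply one_add_mul_self_le_rpow_one_add _ ht.le
    have : (0:ℝ) ≤ 1 / (t * S + c) := by positivity
    linarith
  have hbase : (0 : ℝ) < 1 + 1 / (t * S + c) := by positivity
  have h3 : Real.logb 2 ((1 + 1 / (t * S + c)) ^ t)
      = t * Real.logb 2 (1 + 1 / (t * S + c)) := by
    unfold Real.logb
    rw [Real.log_rpow hbase]
    ring
  calc Real.logb 2 (1 + 1 / (S + c))
      < Real.logb 2 ((1 + 1 / (t * S + c)) ^ t) := by
        apply Real.logb_lt_logb one_lt_two (by positivity)
        linarith
    _ = t * Real.logb 2 (1 + 1 / (t * S + c)) := h3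

/-- The fixed point `ρ*` is the unique maximizer of the total load over
`{ρ ≥ 0 : ρ ≤ f(ρ)}`. -/
theorem stmt_18
    (n : ℕ) (hn : 2 ≤ n)
    (J : Fin n → Finset ℕ) (hJ : ∀ i, (J i).Nonempty)
    (a c : Fin n → ℕ → ℝ) (b : Fin n → Fin n → ℕ → ℝ)
    (ha : ∀ i, ∀ j ∈ J i, 0 < a i j)
    (hc : ∀ i, ∀ j ∈ J i, 0 < c i j)
    (hb : ∀ i k, k ≠ i → ∀ j ∈ J i, 0 < b i k j)
    (f : Fin n → (Fin n → ℝ) → ℝ)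
    (hf : ∀ i ρ, f i ρ =
      ∑ j ∈ J i, 1 / (a i j * Real.logb 2
        (1 + 1 / (∑ k ∈ Finset.univ.erase i, b i k j * ρ k + c i j))))
    (ρstar : Fin n → ℝ) (hρstar : ∀ i, 0 ≤ ρstar i)
    (hfix : ∀ i, f i ρstar = ρstar i)
    (ρ : Fin n → ℝ) (hρ : ∀ i, 0 ≤ ρ i) (hle : ∀ i, ρ i ≤ f i ρ) :
    ∑ i, ρ i ≤ ∑ i, ρstar i ∧ (∑ i, ρ i = ∑ i, ρstar i → ρ = ρstar) := by
  have hne : (Finset.univ : Finset (Fin n)).Nonempty := by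
    exact ⟨⟨0, by omega⟩, Finset.mem_univ _⟩
  -- interference sum nonneg
  have hSnn : ∀ (σ : Fin n → ℝ), (∀ k, 0 ≤ σ k) → ∀ i j, j ∈ J i →
      0 ≤ ∑ k ∈ Finset.univ.erase i, b i k j * σ k := by
    intro σ hσ i j hj
    apply Finset.sum_nonneg
    intro k hk
    exact mul_nonneg (hb i k (Finset.ne_of_mem_erase hk) j hj).le (hσ k)
  have hlogpos : ∀ x : ℝ, 0 < x → 0 < Real.logb 2 (1 + 1 / x) := by
    intro x hx
    apply Real.logb_pos one_lt_two
    have : 0 < 1 / x := by positivity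
    linarith
  -- positivity of f
  have hfpos : ∀ (σ : Fin n → ℝ), (∀ k, 0 ≤ σ k) → ∀ i, 0 < f i σ := by
    intro σ hσ i
    rw [hf]
    apply Finset.sum_pos _ (hJ i)
    intro j hj
    have hd : 0 < ∑ k ∈ Finset.univ.erase i, b i k j * σ k + c i j := by
      have := hSnn σ hσ i j hj; have := hc i j hj; linarith
    have := hlogpos _ hd
    have := ha i j hj
    positivity
  have hρstarpos : ∀ i, 0 < ρstar i := fun i => hfix i ▸ hfpos ρstar hρstar i
  -- monotonicity of f
  have hmono : ∀ (σ τ : Fin n → ℝ), (∀ k, 0 ≤ σ k) → (∀ k, σ k ≤ τ k) →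
      ∀ i, f i σ ≤ f i τ := by
    intro σ τ hσ hστ i
    rw [hf, hf]
    apply Finset.sum_le_sum
    intro j hj
    have hcj := hc i j hj
    have hSσ := hSnn σ hσ i j hj
    have hSτ : ∑ k ∈ Finset.univ.erase i, b i k j * σ k
        ≤ ∑ k ∈ Finset.univ.erase i, b i k j * τ k := by
      apply Finset.sum_le_sum
      intro k hk
      exact mul_le_mul_of_nonneg_left (hστ k)
        (hb i k (Finset.ne_of_mem_erase hk) j hj).le
    have hdσ : 0 < ∑ k ∈ Finset.univ.erase i, b i k j * σ k + c i j := by linarith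
    have hdτ : 0 < ∑ k ∈ Finset.univ.erase i, b i k j * τ k + c i j := by linarith
    have hinv : 1 / (∑ k ∈ Finset.univ.erase i, b i k j * τ k + c i j)
        ≤ 1 / (∑ k ∈ Finset.univ.erase i, b i k j * σ k + c i j) :=
      one_div_le_one_div_of_le hdσ (by linarith)
    have hlogτ := hlogpos _ hdτ
    have hlog : Real.logb 2 (1 + 1 / (∑ k ∈ Finset.univ.erase i, b i k j * τ k + c i j))
        ≤ Real.logb 2 (1 + 1 / (∑ k ∈ Finset.univ.erase i, b i k j * σ k + c i j)) := by
      have h0 : 0 < 1 / (∑ k ∈ Finset.univ.erase i, b i k j * τ k + c i j) :=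
        one_div_pos.mpr hdτ
      exact Real.logb_le_logb_of_le one_lt_two (by linarith) (by linarith)
    have haij := ha i j hj
    apply one_div_le_one_div_of_le
    · positivity
    · exact mul_le_mul_of_nonneg_left hlog haij.le
  -- componentwise domination
  have hkey : ∀ i, ρ i ≤ ρstar i := by
    by_contra hcon
    push_neg at hcon
    obtain ⟨i1, hi1⟩ := hcon
    obtain ⟨i0, -, hi0⟩ := Finset.exists_max_image Finset.univ
      (fun i => ρ i / ρstar i) hne
    set t := ρ i0 / ρstar i0 with ht_def
    have ht : 1 < t := by
      have h1 : 1 < ρ i1 / ρstar i1 := (one_lt_div (hρstarpos i1)).mpr hi1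
      exact lt_of_lt_of_le h1 (hi0 i1 (Finset.mem_univ i1))
    have hub : ∀ k, ρ k ≤ t * ρstar k := by
      intro k
      have h := hi0 k (Finset.mem_univ k)
      rw [div_le_iff₀ (hρstarpos k)] at h
      linarith [h]
    have heq0 : t * ρstar i0 = ρ i0 := by
      rw [ht_def, div_mul_cancel₀ _ (hρstarpos i0).ne']
    -- strict scalability at i0
    have hscal : f i0 (fun k => t * ρstar k) < t * f i0 ρstar := by
      rw [hf, hf, Finset.mul_sum]
      apply Finset.sum_lt_sum_of_nonempty (hJ i0)
      intro j hj
      have haij := ha i0 j hj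
      have hcj := hc i0 j hj
      have hS := hSnn ρstar hρstar i0 j hj
      have hrw : ∑ k ∈ Finset.univ.erase i0, b i0 k j * (t * ρstar k)
          = t * ∑ k ∈ Finset.univ.erase i0, b i0 k j * ρstar k := by
        rw [Finset.mul_sum]
        apply Finset.sum_congr rfl
        intro k _
        ring
      rw [hrw]
      set S := ∑ k ∈ Finset.univ.erase i0, b i0 k j * ρstar k
      have hkeyineq := key_scal S (c i0 j) t hS hcj ht
      have hLu : 0 < Real.logb 2 (1 + 1 / (t * S + c i0 j)) := by
        apply hlogpos; nlinarith
      have hLv : 0 < Real.logb 2 (1 + 1 / (S + c i0 j)) := by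
        apply hlogpos; linarith
      rw [mul_one_div, div_lt_div_iff₀ (by positivity) (by positivity), one_mul]
      calc a i0 j * Real.logb 2 (1 + 1 / (S + c i0 j))
          < a i0 j * (t * Real.logb 2 (1 + 1 / (t * S + c i0 j))) := by
            exact mul_lt_mul_of_pos_left hkeyineq haij
        _ = t * (a i0 j * Real.logb 2 (1 + 1 / (t * S + c i0 j))) := by ring
    have hchain : ρ i0 < ρ i0 := by
      calc ρ i0 ≤ f i0 ρ := hle i0
        _ ≤ f i0 (fun k => t * ρstar k) := hmono ρ _ hρ hub i0
        _ < t * f i0 ρstar := hscal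
        _ = t * ρstar i0 := by rw [hfix i0]
        _ = ρ i0 := heq0
    exact lt_irrefl _ hchain
  refine ⟨Finset.sum_le_sum fun i _ => hkey i, ?_⟩
  intro hsum
  funext i
  exact (Finset.sum_eq_sum_iff_of_le fun i _ => hkey i).mp hsum i (Finset.mem_univ i)
end
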